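/- arXiv:2211.10939 — 8 statements merged into one kernel-verified Lean document; each statement's English description precedes it below -/
import Mathlib

section
/- Let s, t be positive integers and let G be a weakly K_{s,t}-saturated graph on s+t vertices (i.e., G is a K_{s,t}-free spanning subgraph of the complete graph K_{s+t} whose non-edges can be added one at a time so that each added edge creates a new copy of K_{s,t}). Then the complement of G contains no cycle. -/
open SimpleGraph

section WSatDefs

variable {α β : Type*}

/-- `G` contains a copy of `F` as a subgraph. -/
def HasCopy (F : SimpleGraph α) (G : SimpleGraph β) : Prop :=
  ∃ f : α ↪ β, ∀ a b, F.Adj a b → G.Adj (f a) (f b)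

/-- `G` contains a copy of `F` using the edge `e`. -/
def CopyAt (F : SimpleGraph α) (G : SimpleGraph β) (e : Sym2 β) : Prop :=
  ∃ f : α ↪ β, (∀ a b, F.Adj a b → G.Adj (f a) (f b)) ∧
    ∃ a b, F.Adj a b ∧ s(f a, f b) = e

/-- One step of a weakly `F`-saturation process: add one missing edge, creating a
new copy of `F` containing that edge. -/
def SatStep (F : SimpleGraph α) (H H' : SimpleGraph β) : Prop :=
  ∃ e ∈ Hᶜ.edgeSet, H' = H ⊔ SimpleGraph.fromEdgeSet {e} ∧ CopyAt F H' e

/-- `H'` is reachable from `H` by a weakly `F`-saturation process. -/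
def SatReaches (F : SimpleGraph α) : SimpleGraph β → SimpleGraph β → Prop :=
  Relation.ReflTransGen (SatStep F)

/-- `G` is weakly `F`-saturated: `F`-free, and the missing edges can be added one at
a time, each creating a new copy of `F` containing it, until the complete graph. -/
def WeaklySat (F : SimpleGraph α) (G : SimpleGraph β) : Prop :=
  ¬ HasCopy F G ∧ SatReaches F G ⊤

/-- The weak saturation number: minimum number of edges of a weakly `F`-saturated
graph on `n` vertices. -/
noncomputable def wsat (n : ℕ) (F : SimpleGraph α) : ℕ :=
  sInf {m | ∃ G : SimpleGraph (Fin n), WeaklySat F G ∧ G.edgeSet.ncard = m}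

/-- The complete bipartite graph `K_{s,t}`. -/
def Kst (s t : ℕ) : SimpleGraph (Fin s ⊕ Fin t) :=
  completeBipartiteGraph (Fin s) (Fin t)

end WSatDefs


lemma exists_first {α β : Type*} (F : SimpleGraph α) (S : Set (Sym2 β))
    (hS : ∀ e ∈ S, ¬ e.IsDiag) (hne : S.Nonempty) :
    ∀ {H : SimpleGraph β}, SatReaches F H ⊤ → Disjoint H.edgeSet S →
    ∃ (K : SimpleGraph β) (e : Sym2 β), e ∈ S ∧ Disjoint K.edgeSet S ∧
      CopyAt F (K ⊔ SimpleGraph.fromEdgeSet {e}) e := by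
  intro H h
  induction h using Relation.ReflTransGen.head_induction_on with
  | refl =>
      intro hd
      obtain ⟨e, he⟩ := hne
      exact absurd (hd.ne_of_mem (by simp [edgeSet_top, hS e he]) he) (fun h => h rfl)
  | head step rest ih =>
      rename_i A B
      obtain ⟨e, heH, rfl, hcopy⟩ := step
      intro hd
      by_cases heS : e ∈ S
      · exact ⟨_, e, heS, hd, hcopy⟩
      · apply ih
        rw [edgeSet_sup, edgeSet_fromEdgeSet]
        refine Set.disjoint_union_left.2 ⟨hd, ?_⟩
        refine Set.disjoint_left.2 fun x hx hxS => ?_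
        obtain ⟨rfl, -⟩ := hx
        exact heS hxS

theorem complement_acyclic_of_weaklySat (s t : ℕ) (hs : 0 < s) (ht : 0 < t)
    (G : SimpleGraph (Fin (s + t))) (h : WeaklySat (Kst s t) G) :
    Gᶜ.IsAcyclic := by
  classical
  intro v p hp
  set S : Set (Sym2 (Fin (s+t))) := {e | e ∈ p.edges} with hSdef
  have hsub : ∀ e ∈ S, e ∈ Gᶜ.edgeSet := fun e he => p.edges_subset_edgeSet he
  have hdiag : ∀ e ∈ S, ¬ e.IsDiag := fun e he => Gᶜ.not_isDiag_of_mem_edgeSet (hsub e he)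
  have hne : S.Nonempty := by
    cases p with
    | nil => exact absurd hp (by simp [SimpleGraph.Walk.isCycle_def])
    | cons hadj q => exact ⟨_, List.mem_cons_self⟩
  have hdisj : Disjoint G.edgeSet S := by
    refine Set.disjoint_left.2 fun x hx hxS => ?_
    have hx2 := hsub x hxS
    induction x using Sym2.ind with
    | _ a b => exact (Gᶜ.mem_edgeSet.1 hx2).2 (G.mem_edgeSet.1 hx)
  obtain ⟨K, e, heS, hKdisj, f, hmap, a, b, hab, hfe⟩ :=
    exists_first (Kst s t) S hdiag hne h.2 hdisj
  have hsurj : Function.Surjective f :=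
    ((Fintype.bijective_iff_injective_and_card f).2 ⟨f.injective, by simp⟩).2
  set P : Fin (s+t) → ZMod 2 :=
    fun x => if ∃ i : Fin s, f (Sum.inl i) = x then 0 else 1 with hPdef
  have hPl : ∀ i : Fin s, P (f (Sum.inl i)) = 0 := fun i => by simp only [hPdef]; rw [if_pos ⟨i, rfl⟩]
  have hPr : ∀ j : Fin t, P (f (Sum.inr j)) = 1 := by
    intro j
    have : ¬ ∃ i : Fin s, f (Sum.inl i) = f (Sum.inr j) := by
      rintro ⟨i, hi⟩
      exact absurd (f.injective hi) (by simp)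
    simp [hPdef, this]
  have hne2 : ∀ x y : ZMod 2, x ≠ y → y = x + 1 := by decide
  -- cross edges are present
  have hcross : ∀ x y, P x ≠ P y → (K ⊔ SimpleGraph.fromEdgeSet {e}).Adj x y := by
    intro x y hxy
    obtain ⟨c, rfl⟩ := hsurj x
    obtain ⟨d, rfl⟩ := hsurj y
    rcases c with i | i <;> rcases d with j | j
    · exact absurd (by rw [hPl i, hPl j]) hxy
    · exact hmap _ _ (by simp [Kst])
    · exact hmap _ _ (by simp [Kst])
    · exact absurd (by rw [hPr i, hPr j]) hxy
  -- edge e flips P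
  have hflip : ∀ x z : Fin (s+t), s(x, z) = e → P z = P x + 1 := by
    intro x z hxz
    have hPab : P (f a) ≠ P (f b) := by
      rcases a with i | i <;> rcases b with j | j
      · simp [Kst] at hab
      · rw [hPl i, hPr j]; decide
      · rw [hPr i, hPl j]; decide
      · simp [Kst] at hab
    rw [← hfe, Sym2.eq_iff] at hxz
    rcases hxz with ⟨rfl, rfl⟩ | ⟨rfl, rfl⟩
    · exact hne2 _ _ hPab
    · exact hne2 _ _ (Ne.symm hPab)
  -- other edges of the cycle preserve P
  have hpres : ∀ x z : Fin (s+t), s(x, z) ∈ p.edges → s(x, z) ≠ e → P z = P x := by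
    intro x z hmem hnee
    by_contra hPne
    have hadj := hcross x z (fun hh => hPne hh.symm)
    have hmemE : s(x, z) ∈ (K ⊔ SimpleGraph.fromEdgeSet {e}).edgeSet := hadj
    rw [edgeSet_sup, edgeSet_fromEdgeSet] at hmemE
    rcases hmemE with hK | ⟨he1, -⟩
    · exact Set.disjoint_left.1 hKdisj hK hmem
    · exact hnee he1
  -- parity along walks
  have key : ∀ {x y : Fin (s+t)} (q : Gᶜ.Walk x y),
      (∀ e' ∈ q.edges, e' ∈ p.edges) → P y = P x + (q.edges.count e : ZMod 2) := by
    intro x y q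
    induction q with
    | nil => simp
    | @cons x' z' y' hadj q ih =>
      intro hedges
      have hq : ∀ e' ∈ q.edges, e' ∈ p.edges :=
        fun e' he' => hedges e' (List.mem_cons_of_mem _ he')
      have h1 : s(x', z') ∈ p.edges := hedges _ (List.mem_cons_self)
      rw [SimpleGraph.Walk.edges_cons, List.count_cons]
      by_cases hce : s(x', z') = e
      · rw [if_pos (by simp [hce]), ih hq, hflip _ _ hce]
        push_cast
        ring
      · rw [if_neg (by simp [hce]), ih hq, hpres _ _ h1 hce]
        push_cast
        ring
  have hcount := key p (fun _ he => he)
  have hc1 : p.edges.count e = 1 :=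
    List.count_eq_one_of_mem hp.edges_nodup heS
  rw [hc1, Nat.cast_one] at hcount
  exact one_ne_zero (left_eq_add.1 hcount)
end

section
/- Let s, t be positive integers with gcd(s,t) ≠ 1, and let G be a weakly K_{s,t}-saturated graph on s+t vertices. Then the complement of G is disconnected. -/
open SimpleGraph

lemma mem_of_walk_closed {V : Type*} {K : SimpleGraph V} {S : Finset V}
    (hS : ∀ x ∈ S, ∀ y, K.Adj x y → y ∈ S) :
    ∀ {x y : V}, K.Walk x y → x ∈ S → y ∈ S := by
  intro x y w
  induction w with
  | nil => exact id
  | cons h _ ih => intro hx; exact ih (hS _ hx _ h)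

theorem complement_disconnected_of_weaklySat (s t : ℕ) (hs : 0 < s) (ht : 0 < t)
    (hgcd : Nat.gcd s t ≠ 1)
    (G : SimpleGraph (Fin (s + t))) (h : WeaklySat (Kst s t) G) :
    ¬ Gᶜ.Connected := by
  classical
  intro hconn
  set d := Nat.gcd s t with hd
  -- The invariant: every `Hᶜ`-closed set has cardinality divisible by d
  let P : SimpleGraph (Fin (s + t)) → Prop := fun H =>
    ∀ S : Finset (Fin (s + t)), (∀ x ∈ S, ∀ y, Hᶜ.Adj x y → y ∈ S) → d ∣ S.card
  -- Base case
  have hPG : P G := by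
    intro S hS
    by_cases hne : S = ∅
    · simp [hne]
    by_cases huniv : S = Finset.univ
    · subst huniv
      have : (Finset.univ : Finset (Fin (s + t))).card = s + t := by simp
      rw [this]
      exact Nat.dvd_add (Nat.gcd_dvd_left s t) (Nat.gcd_dvd_right s t)
    · exfalso
      obtain ⟨x, hx⟩ := Finset.nonempty_iff_ne_empty.mpr hne
      obtain ⟨y, hy⟩ : ∃ y, y ∉ S := by
        by_contra hall
        push_neg at hall
        exact huniv (Finset.eq_univ_iff_forall.mpr hall)
      obtain ⟨w⟩ := hconn.preconnected x y
      exact hy (mem_of_walk_closed hS w hx)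
  -- Step case
  have hstep : ∀ H H' : SimpleGraph (Fin (s + t)),
      SatStep (Kst s t) H H' → P H → P H' := by
    rintro H H' ⟨e, he, hH', f, hf, a₀, b₀, hab, habe⟩ hPH
    have hfsurj : Function.Surjective f :=
      ((Fintype.bijective_iff_injective_and_card f).mpr ⟨f.injective, by simp⟩).2
    set A : Finset (Fin (s + t)) := Finset.univ.image (fun a : Fin s => f (Sum.inl a)) with hA
    set B : Finset (Fin (s + t)) := Finset.univ.image (fun b : Fin t => f (Sum.inr b)) with hB
    have hAmem : ∀ a : Fin s, f (Sum.inl a) ∈ A := by intro a; simp [hA]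
    have hBmem : ∀ b : Fin t, f (Sum.inr b) ∈ B := by intro b; simp [hB]
    have hcardA : A.card = s := by
      rw [hA, Finset.card_image_of_injective _
        (fun a b hab => Sum.inl_injective (f.injective hab))]
      simp
    have hdisj : ∀ x, x ∈ A → x ∈ B → False := by
      intro x hxA hxB
      simp only [hA, hB, Finset.mem_image, Finset.mem_univ, true_and] at hxA hxB
      obtain ⟨a, ha⟩ := hxA
      obtain ⟨b, hb⟩ := hxB
      exact Sum.inl_ne_inr (f.injective (ha.trans hb.symm))
    have hmemB : ∀ x, x ∉ A → x ∈ B := by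
      intro x hx
      obtain ⟨z, hz⟩ := hfsurj x
      cases z with
      | inl a => exact absurd (hz ▸ hAmem a) hx
      | inr b => exact hz ▸ hBmem b
    -- no complement edges across the bipartition
    have hcross : ∀ x ∈ A, ∀ y ∈ B, ¬ H'ᶜ.Adj x y := by
      intro x hx y hy hadj
      simp only [hA, hB, Finset.mem_image, Finset.mem_univ, true_and] at hx hy
      obtain ⟨a, ha⟩ := hx
      obtain ⟨b, hb⟩ := hy
      have : H'.Adj x y := by
        rw [← ha, ← hb]
        exact hf _ _ (by simp [Kst, completeBipartiteGraph])
      exact hadj.2 this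
    -- the endpoints of e
    obtain ⟨u, v, hu, hv, huv⟩ : ∃ u v, u ∈ A ∧ v ∈ B ∧ e = s(u, v) := by
      cases a₀ with
      | inl a =>
        cases b₀ with
        | inl b => simp [Kst, completeBipartiteGraph] at hab
        | inr b => exact ⟨f (Sum.inl a), f (Sum.inr b), hAmem a, hBmem b, habe.symm⟩
      | inr a =>
        cases b₀ with
        | inl b =>
          refine ⟨f (Sum.inl b), f (Sum.inr a), hAmem b, hBmem a, ?_⟩
          rw [← habe, Sym2.eq_swap]
        | inr b => simp [Kst, completeBipartiteGraph] at hab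
    -- complement edges away from e survive
    have hKK' : ∀ x y, Hᶜ.Adj x y → s(x, y) ≠ e → H'ᶜ.Adj x y := by
      intro x y hxy hne
      rw [SimpleGraph.compl_adj] at hxy ⊢
      refine ⟨hxy.1, ?_⟩
      rw [hH']
      simp only [SimpleGraph.sup_adj, SimpleGraph.fromEdgeSet_adj, Set.mem_singleton_iff]
      push_neg
      exact ⟨hxy.2, fun hmem => absurd hmem hne⟩
    -- closed sets avoiding both u and v are closed for Hᶜ as well
    have key : ∀ T : Finset (Fin (s + t)),
        (∀ x ∈ T, ∀ y, H'ᶜ.Adj x y → y ∈ T) → u ∉ T → v ∉ T → d ∣ T.card := by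
      intro T hT hunotin hvnotin
      refine hPH T ?_
      intro x hx y hxy
      by_cases hce : s(x, y) = e
      · rw [huv, Sym2.eq_iff] at hce
        rcases hce with ⟨rfl, rfl⟩ | ⟨rfl, rfl⟩
        · exact absurd hx hunotin
        · exact absurd hx hvnotin
      · exact hT x hx y (hKK' x y hxy hce)
    -- closed sets within A
    have keyA : ∀ T : Finset (Fin (s + t)), T ⊆ A →
        (∀ x ∈ T, ∀ y, H'ᶜ.Adj x y → y ∈ T) → d ∣ T.card := by
      intro T hTA hT
      have hvT : v ∉ T := fun hvT => hdisj v (hTA hvT) hv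
      by_cases huT : u ∈ T
      · -- consider A \ T
        have hclosed : ∀ x ∈ A \ T, ∀ y, H'ᶜ.Adj x y → y ∈ A \ T := by
          intro x hx y hxy
          rw [Finset.mem_sdiff] at hx ⊢
          have hyA : y ∈ A := by
            by_contra hyA
            exact hcross x hx.1 y (hmemB y hyA) hxy
          refine ⟨hyA, fun hyT => hx.2 (hT y hyT x hxy.symm)⟩
        have huAT : u ∉ A \ T := fun hmem => (Finset.mem_sdiff.mp hmem).2 huT
        have hvAT : v ∉ A \ T := fun hmem => hdisj v (Finset.mem_sdiff.mp hmem).1 hv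
        have hdvd : d ∣ (A \ T).card := key _ hclosed huAT hvAT
        rw [Finset.card_sdiff_of_subset hTA, hcardA] at hdvd
        have hle : T.card ≤ s := le_of_le_of_eq (Finset.card_le_card hTA) hcardA
        have := Nat.dvd_sub (Nat.gcd_dvd_left s t) hdvd
        rwa [Nat.sub_sub_self hle] at this
      · exact key T hT huT hvT
    -- closed sets within B
    have keyB : ∀ T : Finset (Fin (s + t)), (∀ x ∈ T, x ∈ B) →
        (∀ x ∈ T, ∀ y, H'ᶜ.Adj x y → y ∈ T) → d ∣ T.card := by
      intro T hTB hT
      have huT : u ∉ T := fun huT => hdisj u hu (hTB u huT)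
      by_cases hvT : v ∈ T
      · -- consider B \ T
        have hTB' : T ⊆ B := fun x hx => hTB x hx
        have hclosed : ∀ x ∈ B \ T, ∀ y, H'ᶜ.Adj x y → y ∈ B \ T := by
          intro x hx y hxy
          rw [Finset.mem_sdiff] at hx ⊢
          have hyB : y ∈ B := by
            by_contra hyB
            have hyA : y ∈ A := by
              obtain ⟨z, hz⟩ := hfsurj y
              cases z with
              | inl a => exact hz ▸ hAmem a
              | inr b => exact absurd (hz ▸ hBmem b) hyB
            exact hcross y hyA x hx.1 hxy.symm
          refine ⟨hyB, fun hyT => hx.2 (hT y hyT x hxy.symm)⟩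
        have hvBT : v ∉ B \ T := fun hmem => (Finset.mem_sdiff.mp hmem).2 hvT
        have huBT : u ∉ B \ T := fun hmem => hdisj u hu (Finset.mem_sdiff.mp hmem).1
        have hdvd : d ∣ (B \ T).card := key _ hclosed huBT hvBT
        have hcardB : B.card = t := by
          rw [hB, Finset.card_image_of_injective _
            (fun a b hab => Sum.inr_injective (f.injective hab))]
          simp
        rw [Finset.card_sdiff_of_subset hTB', hcardB] at hdvd
        have hle : T.card ≤ t := le_of_le_of_eq (Finset.card_le_card hTB') hcardB
        have := Nat.dvd_sub (Nat.gcd_dvd_right s t) hdvd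
        rwa [Nat.sub_sub_self hle] at this
      · exact key T hT huT hvT
    -- the main step
    intro S hS
    have hSA : ∀ x ∈ S ∩ A, ∀ y, H'ᶜ.Adj x y → y ∈ S ∩ A := by
      intro x hx y hxy
      rw [Finset.mem_inter] at hx ⊢
      have hyA : y ∈ A := by
        by_contra hyA
        exact hcross x hx.2 y (hmemB y hyA) hxy
      exact ⟨hS x hx.1 y hxy, hyA⟩
    have hSB : ∀ x ∈ S ∩ B, ∀ y, H'ᶜ.Adj x y → y ∈ S ∩ B := by
      intro x hx y hxy
      rw [Finset.mem_inter] at hx ⊢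
      have hyB : y ∈ B := by
        by_contra hyB
        have hyA : y ∈ A := by
          obtain ⟨z, hz⟩ := hfsurj y
          cases z with
          | inl a => exact hz ▸ hAmem a
          | inr b => exact absurd (hz ▸ hBmem b) hyB
        exact hcross y hyA x hx.2 hxy.symm
      exact ⟨hS x hx.1 y hxy, hyB⟩
    have hdA : d ∣ (S ∩ A).card := keyA _ (Finset.inter_subset_right) hSA
    have hdB : d ∣ (S ∩ B).card := keyB _ (fun x hx => (Finset.mem_inter.mp hx).2) hSB
    have hsplit : S.card = (S ∩ A).card + (S ∩ B).card := by
      rw [← Finset.card_union_of_disjoint]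
      · congr 1
        ext x
        simp only [Finset.mem_union, Finset.mem_inter]
        constructor
        · intro hx
          by_cases hxA : x ∈ A
          · exact Or.inl ⟨hx, hxA⟩
          · exact Or.inr ⟨hx, hmemB x hxA⟩
        · rintro (⟨hx, _⟩ | ⟨hx, _⟩) <;> exact hx
      · rw [Finset.disjoint_left]
        intro x hx hx'
        exact hdisj x (Finset.mem_inter.mp hx).2 (Finset.mem_inter.mp hx').2
    rw [hsplit]
    exact Nat.dvd_add hdA hdB
  -- propagate the invariant along the process
  have hreach : ∀ H : SimpleGraph (Fin (s + t)), SatReaches (Kst s t) G H → P H := by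
    intro H hr
    induction hr with
    | refl => exact hPG
    | tail _ hst ih => exact hstep _ _ hst ih
  have hPtop := hreach ⊤ h.2
  have h1 : d ∣ ({(⟨0, by omega⟩ : Fin (s + t))} : Finset (Fin (s + t))).card := by
    apply hPtop
    intro x hx y hadj
    rw [SimpleGraph.compl_adj] at hadj
    exact absurd (SimpleGraph.top_adj x y |>.mpr hadj.1) hadj.2
  rw [Finset.card_singleton] at h1
  exact hgcd (Nat.dvd_one.mp h1)
end

section
/- For all positive integers s and t, wsat(s+t, K_{s,t}) ≥ C(s+t-1, 2), i.e., every weakly K_{s,t}-saturated graph on s+t vertices has at least C(s+t-1,2) edges. -/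
open SimpleGraph

private lemma kst_adj_iff {s t : ℕ} (a b : Fin s ⊕ Fin t) :
    (Kst s t).Adj a b ↔ a.isLeft ≠ b.isLeft := by
  cases a <;> cases b <;> simp [Kst]

private lemma not_reachable_compl {s t : ℕ} {H : SimpleGraph (Fin (s + t))}
    (f : Fin s ⊕ Fin t ↪ Fin (s + t))
    (hf : ∀ a b, (Kst s t).Adj a b → H.Adj (f a) (f b))
    {a b : Fin s ⊕ Fin t} (hab : (Kst s t).Adj a b) :
    ¬ Hᶜ.Reachable (f a) (f b) := by
  have hbij : Function.Bijective f := by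
    rw [Fintype.bijective_iff_injective_and_card]
    exact ⟨f.injective, by simp⟩
  set g := Equiv.ofBijective f hbij with hg
  have hfg : ∀ x, f (g.symm x) = x := fun x => g.apply_symm_apply x
  have hside : ∀ x y : Fin (s + t), Hᶜ.Adj x y →
      (g.symm x).isLeft = (g.symm y).isLeft := by
    intro x y hxy
    by_contra hne
    have hadj : (Kst s t).Adj (g.symm x) (g.symm y) := (kst_adj_iff _ _).2 hne
    have := hf _ _ hadj
    rw [hfg, hfg] at this
    exact hxy.2 this
  have hreach : ∀ x y : Fin (s + t), Hᶜ.Reachable x y →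
      (g.symm x).isLeft = (g.symm y).isLeft := by
    intro x y hr
    obtain ⟨w⟩ := hr
    induction w with
    | nil => rfl
    | cons h p ih => exact (hside _ _ h).trans ih
  intro hr
  have h1 : g.symm (f a) = a := g.symm_apply_apply a
  have h2 : g.symm (f b) = b := g.symm_apply_apply b
  have := hreach _ _ hr
  rw [h1, h2] at this
  exact (kst_adj_iff a b).1 hab this

private lemma reach_inv {s t : ℕ} (H : SimpleGraph (Fin (s + t)))
    (h : SatReaches (Kst s t) H ⊤) :
    Hᶜ.edgeSet.ncard + Nat.card Hᶜ.ConnectedComponent ≤ s + t := by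
  induction h using Relation.ReflTransGen.head_induction_on with
  | refl =>
    have h1 : ((⊤ : SimpleGraph (Fin (s + t)))ᶜ) = ⊥ := compl_top
    rw [h1]
    have hbij : Function.Bijective ((⊥ : SimpleGraph (Fin (s + t))).connectedComponentMk) := by
      constructor
      · intro u v huv
        exact reachable_bot.1 (ConnectedComponent.eq.1 huv)
      · intro c
        exact c.exists_rep
    have h2 : Nat.card (⊥ : SimpleGraph (Fin (s + t))).ConnectedComponent = s + t := by
      rw [← Nat.card_eq_of_bijective _ hbij, Nat.card_eq_fintype_card, Fintype.card_fin]
    rw [edgeSet_bot]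
    simp only [Set.ncard_empty, zero_add]
    exact le_of_eq h2
  | @head H K hstep hrest ih =>
    obtain ⟨e, he, hK, hcopy⟩ := hstep
    obtain ⟨u, v, rfl⟩ : ∃ u v, e = s(u, v) := by
      induction e using Sym2.ind with | _ u v => exact ⟨u, v, rfl⟩
    subst hK
    set K := H ⊔ SimpleGraph.fromEdgeSet {s(u, v)} with hKdef
    have hadj : Hᶜ.Adj u v := (Hᶜ.mem_edgeSet).1 he
    have hne : u ≠ v := hadj.ne
    have hKadj : K.Adj u v := by
      rw [hKdef, sup_adj, fromEdgeSet_adj]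
      exact Or.inr ⟨rfl, hne⟩
    have hle : Kᶜ ≤ Hᶜ := compl_le_compl le_sup_left
    -- the endpoints are not reachable in Kᶜ
    have hnotreach : ¬ Kᶜ.Reachable u v := by
      obtain ⟨f, hf, a, b, hab, heq⟩ := hcopy
      rw [Sym2.eq_iff] at heq
      rcases heq with ⟨h1, h2⟩ | ⟨h1, h2⟩
      · rw [← h1, ← h2]; exact not_reachable_compl f hf hab
      · rw [← h1, ← h2]
        exact fun hr => not_reachable_compl f hf hab hr.symm
    classical
    haveI : Fintype Kᶜ.ConnectedComponent := Fintype.ofFinite _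
    haveI : Fintype Hᶜ.ConnectedComponent := Fintype.ofFinite _
    set φ : Kᶜ.ConnectedComponent → Hᶜ.ConnectedComponent :=
      ConnectedComponent.map (Hom.ofLE hle) with hφ
    have hsurj : Function.Surjective φ := by
      intro c
      induction c using ConnectedComponent.ind with
      | _ w => exact ⟨Kᶜ.connectedComponentMk w, by simp [hφ, ConnectedComponent.map_mk]⟩
    have hninj : ¬ Function.Injective φ := by
      intro hinj
      have h1 : φ (Kᶜ.connectedComponentMk u) = φ (Kᶜ.connectedComponentMk v) := by
        simp only [hφ, ConnectedComponent.map_mk]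
        exact ConnectedComponent.eq.2 hadj.reachable
      exact hnotreach (ConnectedComponent.eq.1 (hinj h1))
    have hlt : Fintype.card Hᶜ.ConnectedComponent < Fintype.card Kᶜ.ConnectedComponent :=
      Fintype.card_lt_of_surjective_not_injective φ hsurj hninj
    -- edge sets
    have hKadjuv : ¬ Kᶜ.Adj u v := fun hc => hc.2 hKadj
    have hset : Hᶜ.edgeSet = insert s(u, v) Kᶜ.edgeSet := by
      ext e'
      induction e' using Sym2.ind with
      | _ x y =>
        simp only [mem_edgeSet, Set.mem_insert_iff]
        constructor
        · intro hxy
          by_cases hcase : s(x, y) = s(u, v)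
          · exact Or.inl hcase
          · refine Or.inr ⟨hxy.ne, ?_⟩
            rw [hKdef, sup_adj, fromEdgeSet_adj]
            push_neg
            exact ⟨hxy.2, fun hm => absurd (Set.mem_singleton_iff.mp hm) hcase⟩
        · rintro (hcase | hxy)
          · rw [Sym2.eq_iff] at hcase
            rcases hcase with ⟨rfl, rfl⟩ | ⟨rfl, rfl⟩
            · exact hadj
            · exact hadj.symm
          · exact ⟨hxy.ne, fun hc => hxy.2 (by rw [hKdef, sup_adj]; exact Or.inl hc)⟩
    have hnm : s(u, v) ∉ Kᶜ.edgeSet := fun hm => hKadjuv ((Kᶜ.mem_edgeSet).1 hm)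
    have hcard : Hᶜ.edgeSet.ncard = Kᶜ.edgeSet.ncard + 1 := by
      rw [hset, Set.ncard_insert_of_notMem hnm (Set.toFinite _)]
    rw [Nat.card_eq_fintype_card] at ih ⊢
    omega

private lemma bound_of_wsat {s t : ℕ} (hs : 0 < s) (ht : 0 < t)
    (G : SimpleGraph (Fin (s + t))) (hG : WeaklySat (Kst s t) G) :
    (s + t - 1).choose 2 ≤ G.edgeSet.ncard := by
  classical
  have hinv := reach_inv G hG.2
  haveI : Nonempty Gᶜ.ConnectedComponent :=
    ⟨Gᶜ.connectedComponentMk ⟨0, by omega⟩⟩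
  have hpos : 0 < Nat.card Gᶜ.ConnectedComponent := Nat.card_pos
  have hcle : Gᶜ.edgeSet.ncard ≤ s + t - 1 := by omega
  letI : DecidableRel G.Adj := Classical.decRel _
  -- edge counting
  have hdisj : Disjoint G.edgeFinset Gᶜ.edgeFinset := by
    rw [Finset.disjoint_left]
    intro e h1 h2
    induction e using Sym2.ind with
    | _ x y =>
      rw [mem_edgeFinset, mem_edgeSet] at h1 h2
      exact h2.2 h1
  have hU : G.edgeFinset ∪ Gᶜ.edgeFinset = (⊤ : SimpleGraph (Fin (s + t))).edgeFinset := by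
    ext e
    induction e using Sym2.ind with
    | _ x y =>
      simp only [Finset.mem_union, mem_edgeFinset, mem_edgeSet, compl_adj, top_adj]
      constructor
      · rintro (h | h)
        · exact h.ne
        · exact h.1
      · intro hxy
        by_cases h : G.Adj x y
        · exact Or.inl h
        · exact Or.inr ⟨hxy, h⟩
  have htop : (⊤ : SimpleGraph (Fin (s + t))).edgeFinset.card = (s + t).choose 2 := by
    rw [card_edgeFinset_top_eq_card_choose_two, Fintype.card_fin]
  have hsum : G.edgeSet.ncard + Gᶜ.edgeSet.ncard = (s + t).choose 2 := by
    rw [Set.ncard_eq_toFinset_card', Set.ncard_eq_toFinset_card']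
    rw [← htop, ← hU, Finset.card_union_of_disjoint hdisj]
    rfl
  have hch : ∀ m : ℕ, (m + 1).choose 2 = m.choose 2 + m := by
    intro m
    simp [Nat.choose_succ_succ, Nat.choose_one_right]
    omega
  have h1 : s + t - 1 + 1 = s + t := by omega
  have h2 := hch (s + t - 1)
  rw [h1] at h2
  omega

/-- Star with edges `(0, i)` for `1 ≤ i ≤ k`, on `Fin (s+t)`. -/
private def starG (s t k : ℕ) : SimpleGraph (Fin (s + t)) where
  Adj x y := (x.val = 0 ∧ 1 ≤ y.val ∧ y.val ≤ k) ∨ (y.val = 0 ∧ 1 ≤ x.val ∧ x.val ≤ k)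
  symm := by constructor; intro x y h; tauto
  loopless := by constructor; intro x h; rcases h with ⟨h1, h2, _⟩ | ⟨h1, h2, _⟩ <;> omega

private lemma starG_adj {s t k : ℕ} (x y : Fin (s + t)) :
    (starG s t k).Adj x y ↔
      (x.val = 0 ∧ 1 ≤ y.val ∧ y.val ≤ k) ∨ (y.val = 0 ∧ 1 ≤ x.val ∧ x.val ≤ k) :=
  Iff.rfl

private lemma starG_zero (s t : ℕ) : starG s t 0 = ⊥ := by
  ext x y
  rw [starG_adj, bot_adj, iff_false]
  omega

private def emb (s t k : ℕ) (hs : 0 < s) (hkn : k < s + t) : Fin s ⊕ Fin t → Fin (s + t)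
  | Sum.inl i => if i.val = 0 then ⟨k, hkn⟩ else ⟨t + i.val, by have := i.isLt; omega⟩
  | Sum.inr j => if j.val < k then ⟨j.val, by have := j.isLt; omega⟩
      else ⟨j.val + 1, by have := j.isLt; omega⟩

private lemma emb_inl_val {s t k : ℕ} (hs : 0 < s) (hkn : k < s + t) (i : Fin s) :
    (emb s t k hs hkn (Sum.inl i)).val = if i.val = 0 then k else t + i.val := by
  by_cases h : i.val = 0 <;> simp [emb, h]

private lemma emb_inr_val {s t k : ℕ} (hs : 0 < s) (hkn : k < s + t) (j : Fin t) :
    (emb s t k hs hkn (Sum.inr j)).val = if j.val < k then j.val else j.val + 1 := by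
  by_cases h : j.val < k <;> simp [emb, h]

private lemma satstep_star {s t : ℕ} (hs : 0 < s) (ht : 0 < t) {k : ℕ}
    (hk1 : 1 ≤ k) (hkt : k ≤ t) :
    SatStep (Kst s t) (starG s t k)ᶜ (starG s t (k - 1))ᶜ := by
  have hkn : k < s + t := by omega
  have h0n : 0 < s + t := by omega
  have hinj : Function.Injective (emb s t k hs hkn) := by
    intro a b heq
    have h := congrArg Fin.val heq
    cases a with
    | inl i =>
      cases b with
      | inl i' =>
        rw [emb_inl_val, emb_inl_val] at h
        have hi := i.isLt; have hi' := i'.isLt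
        refine congrArg Sum.inl (Fin.ext ?_)
        split_ifs at h <;> omega
      | inr j =>
        exfalso
        rw [emb_inl_val, emb_inr_val] at h
        have hi := i.isLt; have hj := j.isLt
        split_ifs at h <;> omega
    | inr j =>
      cases b with
      | inl i =>
        exfalso
        rw [emb_inr_val, emb_inl_val] at h
        have hi := i.isLt; have hj := j.isLt
        split_ifs at h <;> omega
      | inr j' =>
        rw [emb_inr_val, emb_inr_val] at h
        have hj := j.isLt; have hj' := j'.isLt
        refine congrArg Sum.inr (Fin.ext ?_)
        split_ifs at h <;> omega
  refine ⟨s(⟨0, h0n⟩, ⟨k, hkn⟩), ?_, ?_, ?_⟩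
  · rw [compl_compl, mem_edgeSet, starG_adj]
    exact Or.inl ⟨rfl, hk1, le_refl k⟩
  · ext x y
    simp only [compl_adj, sup_adj, fromEdgeSet_adj, Set.mem_singleton_iff, Sym2.eq_iff,
      starG_adj, ne_eq, Fin.ext_iff]
    omega
  · have hcross : ∀ (i : Fin s) (j : Fin t),
        (starG s t (k - 1))ᶜ.Adj (emb s t k hs hkn (Sum.inl i)) (emb s t k hs hkn (Sum.inr j)) := by
      intro i j
      rw [compl_adj, ne_eq, Fin.ext_iff, starG_adj, emb_inl_val, emb_inr_val]
      have hi := i.isLt; have hj := j.isLt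
      split_ifs <;> omega
    refine ⟨⟨emb s t k hs hkn, hinj⟩, ?_, ?_⟩
    · intro a b hab
      cases a with
      | inl i =>
        cases b with
        | inl i' => simp [Kst] at hab
        | inr j => exact hcross i j
      | inr j =>
        cases b with
        | inr j' => simp [Kst] at hab
        | inl i => exact (hcross i j).symm
    · refine ⟨Sum.inl ⟨0, hs⟩, Sum.inr ⟨0, ht⟩, by simp [Kst], ?_⟩
      have h1 : emb s t k hs hkn (Sum.inl ⟨0, hs⟩) = ⟨k, hkn⟩ := by simp [emb]
      have h2 : emb s t k hs hkn (Sum.inr ⟨0, ht⟩) = ⟨0, h0n⟩ := by simp [emb]; omega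
      simp only [Function.Embedding.coeFn_mk, h1, h2]
      exact Sym2.eq_swap

private lemma reaches_star {s t : ℕ} (hs : 0 < s) (ht : 0 < t) :
    ∀ k, k ≤ t → SatReaches (Kst s t) (starG s t k)ᶜ ⊤ := by
  intro k
  induction k with
  | zero =>
    intro _
    rw [starG_zero, compl_bot]
    exact Relation.ReflTransGen.refl
  | succ k ih =>
    intro hk
    have hstep := satstep_star hs ht (k := k + 1) (by omega) hk
    simp only [Nat.add_sub_cancel] at hstep
    exact Relation.ReflTransGen.head hstep (ih (by omega))

private lemma free_star {s t : ℕ} (hs : 0 < s) (ht : 0 < t) (hst : s ≤ t) :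
    ¬ HasCopy (Kst s t) (starG s t t)ᶜ := by
  rintro ⟨f, hf⟩
  have hbij : Function.Bijective f := by
    rw [Fintype.bijective_iff_injective_and_card]
    exact ⟨f.injective, by simp⟩
  set g := Equiv.ofBijective f hbij with hg
  have hfg : ∀ x, f (g.symm x) = x := fun x => g.apply_symm_apply x
  have h0n : 0 < s + t := by omega
  have hside : ∀ i : ℕ, (hi : i ≤ t) →
      (g.symm ⟨i, by omega⟩).isLeft = (g.symm ⟨0, h0n⟩).isLeft := by
    intro i hi
    rcases Nat.eq_zero_or_pos i with rfl | hipos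
    · rfl
    by_contra hne
    have hadj : (Kst s t).Adj (g.symm ⟨i, by omega⟩) (g.symm ⟨0, h0n⟩) :=
      (kst_adj_iff _ _).2 hne
    have h2 := hf _ _ hadj
    rw [hfg, hfg] at h2
    exact h2.2 (Or.inr ⟨rfl, hipos, hi⟩)
  -- the t+1 vertices 0..t map to one side of the sum, which has at most t elements
  set ψ : Fin (t + 1) → Fin s ⊕ Fin t := fun i => g.symm ⟨i.val, by have := i.isLt; omega⟩
    with hψ
  have hψinj : Function.Injective ψ := by
    intro a b hab
    have := g.symm.injective hab
    rw [Fin.mk.injEq] at this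
    exact Fin.ext this
  have hψside : ∀ i : Fin (t + 1), (ψ i).isLeft = (g.symm ⟨0, h0n⟩).isLeft := by
    intro i
    exact hside i.val (by have := i.isLt; omega)
  cases hcase : (g.symm ⟨0, h0n⟩).isLeft with
  | true =>
    have hex : ∀ i : Fin (t + 1), ∃ a : Fin s, ψ i = Sum.inl a := by
      intro i
      exact Sum.isLeft_iff.mp (by rw [hψside i, hcase])
    choose χ hχ using hex
    have hχinj : Function.Injective χ := by
      intro a b hab
      apply hψinj
      rw [hχ a, hχ b, hab]
    have := Fintype.card_le_of_injective χ hχinj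
    simp only [Fintype.card_fin] at this
    omega
  | false =>
    have hex : ∀ i : Fin (t + 1), ∃ a : Fin t, ψ i = Sum.inr a := by
      intro i
      refine Sum.isRight_iff.mp ?_
      have := hψside i
      rw [hcase] at this
      cases hr : (ψ i) with
      | inl a => rw [hr] at this; simp at this
      | inr a => simp
    choose χ hχ using hex
    have hχinj : Function.Injective χ := by
      intro a b hab
      apply hψinj
      rw [hχ a, hχ b, hab]
    have := Fintype.card_le_of_injective χ hχinj
    simp only [Fintype.card_fin] at this
    omega

private lemma kst_swap_adj {s t : ℕ} (a b : Fin s ⊕ Fin t) :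
    (Kst s t).Adj a b ↔ (Kst t s).Adj (Equiv.sumComm (Fin s) (Fin t) a)
      (Equiv.sumComm (Fin s) (Fin t) b) := by
  cases a <;> cases b <;> simp [Kst]

private lemma hasCopy_swap {β : Type*} {s t : ℕ} {G : SimpleGraph β}
    (h : HasCopy (Kst t s) G) : HasCopy (Kst s t) G := by
  obtain ⟨f, hf⟩ := h
  refine ⟨(Equiv.sumComm (Fin s) (Fin t)).toEmbedding.trans f, fun a b hab => ?_⟩
  exact hf _ _ ((kst_swap_adj a b).1 hab)

private lemma copyAt_swap {β : Type*} {s t : ℕ} {G : SimpleGraph β} {e : Sym2 β}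
    (h : CopyAt (Kst t s) G e) : CopyAt (Kst s t) G e := by
  obtain ⟨f, hf, a, b, hab, heq⟩ := h
  refine ⟨(Equiv.sumComm (Fin s) (Fin t)).toEmbedding.trans f,
    fun a b hab => hf _ _ ((kst_swap_adj a b).1 hab),
    (Equiv.sumComm (Fin s) (Fin t)).symm a, (Equiv.sumComm (Fin s) (Fin t)).symm b, ?_, ?_⟩
  · rw [kst_swap_adj]
    simpa using hab
  · simpa using heq

private lemma weaklySat_swap {β : Type*} {s t : ℕ} {G : SimpleGraph β}
    (h : WeaklySat (Kst t s) G) : WeaklySat (Kst s t) G := by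
  obtain ⟨hfree, hreach⟩ := h
  constructor
  · intro hc
    exact hfree (hasCopy_swap hc)
  · refine Relation.ReflTransGen.mono ?_ _ _ hreach
    rintro H K ⟨e, he, hK, hcopy⟩
    exact ⟨e, he, hK, copyAt_swap hcopy⟩

private lemma exists_wsat_le {s t : ℕ} (hs : 0 < s) (ht : 0 < t) (hst : s ≤ t) :
    ∃ G : SimpleGraph (Fin (s + t)), WeaklySat (Kst s t) G :=
  ⟨(starG s t t)ᶜ, free_star hs ht hst, reaches_star hs ht t (le_refl t)⟩

private lemma exists_wsat {s t : ℕ} (hs : 0 < s) (ht : 0 < t) :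
    ∃ G : SimpleGraph (Fin (s + t)), WeaklySat (Kst s t) G := by
  rcases le_or_gt s t with h | h
  · exact exists_wsat_le hs ht h
  · have h' := exists_wsat_le ht hs (le_of_lt h)
    rw [Nat.add_comm t s] at h'
    obtain ⟨G, hG⟩ := h'
    exact ⟨G, weaklySat_swap hG⟩

theorem wsat_lower_bound (s t : ℕ) (hs : 0 < s) (ht : 0 < t) :
    (s + t - 1).choose 2 ≤ wsat (s + t) (Kst s t) ∧
    ∀ G : SimpleGraph (Fin (s + t)), WeaklySat (Kst s t) G →
      (s + t - 1).choose 2 ≤ G.edgeSet.ncard := by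
  constructor
  · have hne : {m | ∃ G : SimpleGraph (Fin (s + t)), WeaklySat (Kst s t) G ∧
        G.edgeSet.ncard = m}.Nonempty := by
      obtain ⟨G, hG⟩ := exists_wsat hs ht
      exact ⟨G.edgeSet.ncard, G, hG, rfl⟩
    have hmem := Nat.sInf_mem hne
    obtain ⟨G, hG, hcard⟩ := hmem
    rw [wsat, ← hcard]
    exact bound_of_wsat hs ht G hG
  · exact fun G hG => bound_of_wsat hs ht G hG
end

section
/- For all positive integers s and t with gcd(s,t) ≠ 1, wsat(s+t, K_{s,t}) ≥ C(s+t-1, 2) + 1. -/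
open SimpleGraph

open Finset in
/-- The key linear-algebra fact: over `ZMod p`, one cannot have `n - 1` vectors in
`(Fin n → ZMod p)`, each with coordinate sum zero, together with pairs of coordinates
on which they behave "triangularly", when `n ≡ 0 mod p`. -/
private lemma wsat_final_contradiction (p n : ℕ) [Fact p.Prime]
    (hn : ((n : ℕ) : ZMod p) = 0) (hn1 : 2 ≤ n)
    (x : Fin (n-1) → Fin n → ZMod p) (u v : Fin (n-1) → Fin n)
    (h1 : ∀ i, x i (u i) ≠ x i (v i))
    (h2 : ∀ i j, i < j → x i (u j) = x i (v j))
    (h3 : ∀ i, ∑ w, x i w = 0) : False := by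
  classical
  let y : Option (Fin (n-1)) → (Fin n → ZMod p) := fun o => o.elim (fun _ => 1) x
  have hynone : y none = fun _ => 1 := rfl
  have hysome : ∀ j, y (some j) = x j := fun _ => rfl
  have hli : LinearIndependent (ZMod p) y := by
    rw [Fintype.linearIndependent_iff]
    intro g hg
    have heval : ∀ w, (∑ o : Option (Fin (n-1)), g o * y o w) = 0 := by
      intro w
      have := congrFun hg w
      simpa using this
    have hgsome : ∀ j, g (some j) = 0 := by
      by_contra hcon
      push_neg at hcon
      obtain ⟨j₀, hj₀⟩ := hcon
      set S : Finset (Fin (n-1)) := univ.filter (fun j => g (some j) ≠ 0) with hS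
      have hSne : S.Nonempty := ⟨j₀, by simp [hS, hj₀]⟩
      set m := S.max' hSne with hm
      have hmS : m ∈ S := S.max'_mem hSne
      have hgm : g (some m) ≠ 0 := by simpa [hS] using hmS
      have key : ∑ o : Option (Fin (n-1)), g o * (y o (u m) - y o (v m)) = 0 := by
        simp only [mul_sub, Finset.sum_sub_distrib, heval, sub_zero]
      have key2 : ∑ o : Option (Fin (n-1)), g o * (y o (u m) - y o (v m)) =
          g (some m) * (x m (u m) - x m (v m)) := by
        rw [Finset.sum_eq_single (some m)]
        · rw [hysome]
        · intro b _ hb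
          match b with
          | none => simp [hynone]
          | some j =>
            rcases lt_trichotomy j m with h | h | h
            · rw [hysome, h2 j m h]; simp
            · exact absurd (congrArg some h) hb
            · have hjS : j ∉ S := fun hjS => absurd (S.le_max' j hjS) (not_le.mpr h)
              have : g (some j) = 0 := by simpa [hS] using hjS
              simp [this]
        · intro h; exact absurd (Finset.mem_univ _) h
      rw [key2] at key
      rcases mul_eq_zero.mp key with h | h
      · exact hgm h
      · exact h1 m (sub_eq_zero.mp h)
    intro o
    match o with
    | some j => exact hgsome j
    | none =>
      have h₁ := heval ⟨0, by omega⟩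
      rw [Fintype.sum_option] at h₁
      simpa [hynone, hgsome] using h₁
  have hcard : Fintype.card (Option (Fin (n-1))) = Module.finrank (ZMod p) (Fin n → ZMod p) := by
    simp [Module.finrank_fintype_fun_eq_card]
    omega
  let b := basisOfLinearIndependentOfCardEqFinrank hli hcard
  have hb : ⇑b = y := coe_basisOfLinearIndependentOfCardEqFinrank hli hcard
  have hrepr := b.sum_repr (Pi.single (⟨0, by omega⟩ : Fin n) (1 : ZMod p))
  have hsum := congrArg (fun f => ∑ w, f w) hrepr
  simp only [Finset.sum_apply, Pi.smul_apply, smul_eq_mul] at hsum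
  rw [Finset.sum_comm] at hsum
  have hzero : ∀ o : Option (Fin (n-1)),
      (∑ w, b.repr (Pi.single (⟨0, by omega⟩ : Fin n) (1 : ZMod p)) o * b o w) = 0 := by
    intro o
    rw [← Finset.mul_sum, hb]
    match o with
    | none => rw [hynone]; simp [hn]
    | some j => rw [hysome, h3 j]; simp
  rw [Finset.sum_congr rfl (fun o _ => hzero o)] at hsum
  simp at hsum

/-- From a saturation process reaching the complete graph, extract, for each step,
the indicator vector (over `ZMod p`) of the left side of the complete bipartite copy
created, together with the endpoints of the added edge.  These satisfy a triangular
structure. -/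
private lemma wsat_chain_data (p s t : ℕ) [Fact p.Prime] (hps : p ∣ s)
    (H : SimpleGraph (Fin (s+t))) (hH : SatReaches (Kst s t) H ⊤) :
    ∃ (m : ℕ) (x : Fin m → Fin (s+t) → ZMod p) (u v : Fin m → Fin (s+t)),
      H.edgeSet.ncard + m = (⊤ : SimpleGraph (Fin (s+t))).edgeSet.ncard ∧
      (∀ j, u j ≠ v j) ∧ (∀ j, ¬ H.Adj (u j) (v j)) ∧
      (∀ i, x i (u i) ≠ x i (v i)) ∧
      (∀ i j, i < j → x i (u j) = x i (v j)) ∧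
      (∀ i, ∑ w, x i w = 0) := by
  classical
  induction hH using Relation.ReflTransGen.head_induction_on with
  | refl =>
    exact ⟨0, Fin.elim0, Fin.elim0, Fin.elim0, by simp, fun j => j.elim0, fun j => j.elim0,
      fun i => i.elim0, fun i j _ => j.elim0, fun i => i.elim0⟩
  | @head G c hstep hreach ih =>
    obtain ⟨m, x, u, v, hcount, hne, hnadj, hd1, hd2, hd3⟩ := ih
    obtain ⟨e, he, hceq, f, hfadj, a₀, b₀, hab, hedge⟩ := hstep
    have hfsurj : Function.Surjective f := by
      have : Function.Bijective f :=
        (Fintype.bijective_iff_injective_and_card f).2 ⟨f.injective, by simp⟩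
      exact this.2
    set x₀ : Fin (s+t) → ZMod p := fun w => if ∃ i : Fin s, f (Sum.inl i) = w then 1 else 0
      with hx₀
    set u₀ := f a₀ with hu₀
    set v₀ := f b₀ with hv₀
    have hee : e = s(u₀, v₀) := hedge.symm
    rw [hee] at he
    rw [SimpleGraph.mem_edgeSet, SimpleGraph.compl_adj] at he
    obtain ⟨huv_ne, huv_nadj⟩ := he
    have hGc : G ≤ c := hceq ▸ le_sup_left
    have hval_l : ∀ i : Fin s, x₀ (f (Sum.inl i)) = 1 := by
      intro i; rw [hx₀]; exact if_pos ⟨i, rfl⟩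
    have hval_r : ∀ j : Fin t, x₀ (f (Sum.inr j)) = 0 := by
      intro j; rw [hx₀]
      apply if_neg
      rintro ⟨i, hi⟩
      exact absurd (f.injective hi) (by simp)
    have hcross : ∀ w₁ w₂ : Fin (s+t), x₀ w₁ ≠ x₀ w₂ → c.Adj w₁ w₂ ∨ c.Adj w₂ w₁ := by
      intro w₁ w₂ hne12
      obtain ⟨c₁, rfl⟩ := hfsurj w₁
      obtain ⟨c₂, rfl⟩ := hfsurj w₂
      match c₁, c₂ with
      | Sum.inl i, Sum.inl i' => exact absurd rfl (by rw [hval_l, hval_l] at hne12; exact hne12)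
      | Sum.inr j, Sum.inr j' => exact absurd rfl (by rw [hval_r, hval_r] at hne12; exact hne12)
      | Sum.inl i, Sum.inr j =>
        exact Or.inl (hfadj (Sum.inl i) (Sum.inr j) (by simp [Kst]))
      | Sum.inr j, Sum.inl i =>
        exact Or.inr (hfadj (Sum.inl i) (Sum.inr j) (by simp [Kst]))
    have hx₀uv : x₀ u₀ ≠ x₀ v₀ := by
      have hab' : (a₀.isLeft ∧ b₀.isRight) ∨ (a₀.isRight ∧ b₀.isLeft) := hab
      rcases hab' with ⟨hl, hr⟩ | ⟨hl, hr⟩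
      · obtain ⟨i, rfl⟩ := Sum.isLeft_iff.mp hl
        obtain ⟨j, rfl⟩ := Sum.isRight_iff.mp hr
        rw [hu₀, hv₀, hval_l, hval_r]
        exact one_ne_zero
      · obtain ⟨j, rfl⟩ := Sum.isRight_iff.mp hl
        obtain ⟨i, rfl⟩ := Sum.isLeft_iff.mp hr
        rw [hu₀, hv₀, hval_r, hval_l]
        exact zero_ne_one
    have hx₀sum : ∑ w, x₀ w = 0 := by
      have hinj : Function.Injective (fun i : Fin s => f (Sum.inl i)) :=
        fun a b h => Sum.inl_injective (f.injective h)
      have hcongr : ∀ w ∈ Finset.univ, x₀ w =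
          if w ∈ Finset.univ.image (fun i : Fin s => f (Sum.inl i)) then (1 : ZMod p) else 0 := by
        intro w _
        rw [hx₀]
        simp only [Finset.mem_image, Finset.mem_univ, true_and]
      rw [Finset.sum_congr rfl hcongr, Finset.sum_ite_mem, Finset.univ_inter, Finset.sum_const,
        nsmul_eq_mul, mul_one, Finset.card_image_of_injective _ hinj]
      simp [(ZMod.natCast_eq_zero_iff s p).2 hps]
    have hcount' : G.edgeSet.ncard + 1 = c.edgeSet.ncard := by
      have hnd : ¬ (s(u₀, v₀) : Sym2 (Fin (s+t))).IsDiag := by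
        simp [huv_ne]
      have hins : c.edgeSet = insert (s(u₀,v₀)) G.edgeSet := by
        rw [hceq, SimpleGraph.edgeSet_sup, SimpleGraph.edgeSet_fromEdgeSet, hee]
        ext d
        simp only [Set.mem_union, Set.mem_diff, Set.mem_singleton_iff, Set.mem_insert_iff,
          Set.mem_setOf_eq]
        constructor
        · rintro (h | ⟨rfl, -⟩)
          · exact Or.inr h
          · exact Or.inl rfl
        · rintro (rfl | h)
          · exact Or.inr ⟨rfl, hnd⟩
          · exact Or.inl h
      rw [hins, Set.ncard_insert_of_notMem (by rwa [SimpleGraph.mem_edgeSet]) G.edgeSet.toFinite]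
    have hnewrow : ∀ j' : Fin m, x₀ (u j') = x₀ (v j') := by
      intro j'
      by_contra hcon
      rcases hcross _ _ hcon with h | h
      · exact hnadj j' h
      · exact hnadj j' h.symm
    refine ⟨m + 1, Fin.cons x₀ x, Fin.cons u₀ u, Fin.cons v₀ v, by omega, ?_, ?_, ?_, ?_, ?_⟩
    · intro j
      rcases Fin.eq_zero_or_eq_succ j with rfl | ⟨j', rfl⟩
      · simpa using huv_ne
      · simpa using hne j'
    · intro j
      rcases Fin.eq_zero_or_eq_succ j with rfl | ⟨j', rfl⟩
      · simpa using huv_nadj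
      · simp only [Fin.cons_succ]
        exact fun h => hnadj j' (hGc h)
    · intro i
      rcases Fin.eq_zero_or_eq_succ i with rfl | ⟨i', rfl⟩
      · simpa using hx₀uv
      · simpa using hd1 i'
    · intro i j hij
      rcases Fin.eq_zero_or_eq_succ j with rfl | ⟨j', rfl⟩
      · exact absurd hij (Fin.not_lt_zero _)
      · rcases Fin.eq_zero_or_eq_succ i with rfl | ⟨i', rfl⟩
        · simp only [Fin.cons_zero, Fin.cons_succ]
          exact hnewrow j'
        · simp only [Fin.cons_succ]
          exact hd2 i' j' (by rwa [Fin.succ_lt_succ_iff] at hij)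
    · intro i
      rcases Fin.eq_zero_or_eq_succ i with rfl | ⟨i', rfl⟩
      · simpa using hx₀sum
      · simpa using hd3 i'

/-- Some weakly `K_{s,t}`-saturated graph on `s + t` vertices exists: repeatedly delete
edges lying in copies of `K_{s,t}` from the complete graph until it is `K_{s,t}`-free. -/
private lemma wsat_exists_weaklySat (s t : ℕ) (hs : 0 < s) (ht : 0 < t) :
    ∃ G : SimpleGraph (Fin (s+t)), WeaklySat (Kst s t) G := by
  classical
  suffices h : ∀ (k : ℕ) (H : SimpleGraph (Fin (s+t))), H.edgeSet.ncard ≤ k →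
      ∃ G, ¬ HasCopy (Kst s t) G ∧ SatReaches (Kst s t) G H by
    obtain ⟨G, h1, h2⟩ := h (⊤ : SimpleGraph (Fin (s+t))).edgeSet.ncard ⊤ le_rfl
    exact ⟨G, h1, h2⟩
  intro k
  induction k with
  | zero =>
    intro H hH
    by_cases hfree : HasCopy (Kst s t) H
    · exfalso
      obtain ⟨f, hf⟩ := hfree
      have hadj : H.Adj (f (Sum.inl ⟨0, hs⟩)) (f (Sum.inr ⟨0, ht⟩)) :=
        hf _ _ (by simp [Kst])
      have : s(f (Sum.inl ⟨0, hs⟩), f (Sum.inr ⟨0, ht⟩)) ∈ H.edgeSet :=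
        H.mem_edgeSet.mpr hadj
      have hpos : 0 < H.edgeSet.ncard :=
        (Set.ncard_pos H.edgeSet.toFinite).mpr ⟨_, this⟩
      omega
    · exact ⟨H, hfree, Relation.ReflTransGen.refl⟩
  | succ k ih =>
    intro H hH
    by_cases hfree : HasCopy (Kst s t) H
    · obtain ⟨f, hf⟩ := hfree
      set x₀ := f (Sum.inl ⟨0, hs⟩) with hx
      set y₀ := f (Sum.inr ⟨0, ht⟩) with hy
      have hKadj : (Kst s t).Adj (Sum.inl ⟨0, hs⟩) (Sum.inr ⟨0, ht⟩) := by simp [Kst]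
      have hadj : H.Adj x₀ y₀ := hf _ _ hKadj
      have hxy : x₀ ≠ y₀ := hadj.ne
      set e : Sym2 (Fin (s+t)) := s(x₀, y₀) with he
      have heE : e ∈ H.edgeSet := H.mem_edgeSet.mpr hadj
      set H₀ := H.deleteEdges {e} with hH₀
      have hstep : SatStep (Kst s t) H₀ H := by
        refine ⟨e, ?_, ?_, f, hf, Sum.inl ⟨0, hs⟩, Sum.inr ⟨0, ht⟩, hKadj, rfl⟩
        · rw [he, SimpleGraph.mem_edgeSet, SimpleGraph.compl_adj]
          refine ⟨hxy, ?_⟩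
          rw [hH₀]
          simp [SimpleGraph.deleteEdges_adj, he]
        · apply SimpleGraph.edgeSet_inj.mp
          rw [SimpleGraph.edgeSet_sup, SimpleGraph.edgeSet_fromEdgeSet, hH₀,
            SimpleGraph.edgeSet_deleteEdges]
          ext d
          simp only [Set.mem_union, Set.mem_diff, Set.mem_singleton_iff, Set.mem_setOf_eq]
          constructor
          · intro hd
            by_cases hde : d = e
            · subst hde
              exact Or.inr ⟨rfl, by rw [he]; simp [hxy]⟩
            · exact Or.inl ⟨hd, hde⟩
          · rintro (⟨hd, -⟩ | ⟨rfl, -⟩)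
            · exact hd
            · exact heE
      have hlt : H₀.edgeSet.ncard ≤ k := by
        have : H₀.edgeSet = H.edgeSet \ {e} := by
          rw [hH₀, SimpleGraph.edgeSet_deleteEdges]
        rw [this]
        have := Set.ncard_diff_singleton_lt_of_mem heE H.edgeSet.toFinite
        omega
      obtain ⟨G, hG1, hG2⟩ := ih H₀ hlt
      exact ⟨G, hG1, hG2.tail hstep⟩
    · exact ⟨H, hfree, Relation.ReflTransGen.refl⟩

theorem wsat_lower_bound_gcd_ne_one (s t : ℕ) (hs : 0 < s) (ht : 0 < t)
    (hgcd : Nat.gcd s t ≠ 1) :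
    (s + t - 1).choose 2 + 1 ≤ wsat (s + t) (Kst s t) ∧
    ∀ G : SimpleGraph (Fin (s + t)), WeaklySat (Kst s t) G →
      (s + t - 1).choose 2 + 1 ≤ G.edgeSet.ncard := by
  classical
  obtain ⟨p, hp, hpdvd⟩ := Nat.exists_prime_and_dvd hgcd
  haveI : Fact p.Prime := ⟨hp⟩
  have hps : p ∣ s := hpdvd.trans (Nat.gcd_dvd_left s t)
  have hpt : p ∣ t := hpdvd.trans (Nat.gcd_dvd_right s t)
  have hpn : p ∣ (s + t) := Dvd.dvd.add hps hpt
  have hn0 : ((s + t : ℕ) : ZMod p) = 0 := (ZMod.natCast_eq_zero_iff _ p).2 hpn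
  have hn2 : 2 ≤ s + t := by omega
  -- the number of edges of the complete graph
  have htop : (⊤ : SimpleGraph (Fin (s + t))).edgeSet.ncard = (s + t).choose 2 := by
    rw [Set.ncard_eq_toFinset_card']
    have := SimpleGraph.card_edgeFinset_top_eq_card_choose_two (V := Fin (s + t))
    simpa [SimpleGraph.edgeFinset] using this
  have hchoose : (s + t).choose 2 = (s + t - 1).choose 2 + (s + t - 1) := by
    obtain ⟨k, hk⟩ : ∃ k, s + t = k + 1 := ⟨s + t - 1, by omega⟩
    rw [hk]
    simp [Nat.choose_succ_succ, Nat.choose_one_right]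
    omega
  have main : ∀ G : SimpleGraph (Fin (s + t)), WeaklySat (Kst s t) G →
      (s + t - 1).choose 2 + 1 ≤ G.edgeSet.ncard := by
    intro G hG
    by_contra hlt
    push_neg at hlt
    have hle : G.edgeSet.ncard ≤ (s + t - 1).choose 2 := by omega
    obtain ⟨m, x, u, v, hcount, hne, hnadj, hd1, hd2, hd3⟩ :=
      wsat_chain_data p s t hps G hG.2
    have hm : s + t - 1 ≤ m := by
      rw [htop, hchoose] at hcount
      omega
    exact wsat_final_contradiction p (s + t) hn0 hn2
      (fun i => x (Fin.castLE hm i)) (fun i => u (Fin.castLE hm i)) (fun i => v (Fin.castLE hm i))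
      (fun i => hd1 _)
      (fun i j hij => hd2 _ _ (by rw [Fin.lt_def, Fin.coe_castLE, Fin.coe_castLE]; exact hij))
      (fun i => hd3 _)
  refine ⟨?_, main⟩
  obtain ⟨G₀, hG₀⟩ := wsat_exists_weaklySat s t hs ht
  have hne : {m | ∃ G : SimpleGraph (Fin (s + t)), WeaklySat (Kst s t) G ∧
      G.edgeSet.ncard = m}.Nonempty := ⟨G₀.edgeSet.ncard, G₀, hG₀, rfl⟩
  obtain ⟨G, hG, hcard⟩ := Nat.sInf_mem hne
  rw [wsat, ← hcard]
  exact main G hG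
end

section
/- For all positive integers s and t with gcd(s,t) = 1, the complement of the path P_{s+t} on s+t vertices is a weakly K_{s,t}-saturated graph; consequently wsat(s+t, K_{s,t}) ≤ C(s+t-1, 2). -/
open SimpleGraph

namespace WsatPathAux

/-- Cancel a common added constant in a `Nat.ModEq`, for small values. -/
lemma modeq_cancel {n c a b : ℕ} (ha : a < n) (hb : b < n)
    (h : c + a ≡ c + b [MOD n]) : a = b := by
  have h2 : a ≡ b [MOD n] := Nat.ModEq.add_left_cancel' c h
  rwa [Nat.ModEq, Nat.mod_eq_of_lt ha, Nat.mod_eq_of_lt hb] at h2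

lemma modeq_cancel_le {n c a b : ℕ} (ha : a ≤ n) (hb : b < n)
    (h : c + a ≡ c + b [MOD n]) : a = b ∨ (a = n ∧ b = 0) := by
  have h2 : a ≡ b [MOD n] := Nat.ModEq.add_left_cancel' c h
  rcases lt_or_eq_of_le ha with ha' | rfl
  · left; rwa [Nat.ModEq, Nat.mod_eq_of_lt ha', Nat.mod_eq_of_lt hb] at h2
  · right
    rw [Nat.ModEq, Nat.mod_self, Nat.mod_eq_of_lt hb] at h2
    exact ⟨rfl, h2.symm⟩

/-- The key injectivity: `j ↦ j * s % n` is injective below `n` when `gcd s n = 1`. -/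
lemma cut_inj {s n : ℕ} (hco : Nat.gcd s n = 1) {j1 j2 : ℕ} (h1 : j1 < n) (h2 : j2 < n)
    (h : j1 * s % n = j2 * s % n) : j1 = j2 := by
  have hmod : j1 * s ≡ j2 * s [MOD n] := h
  have := Nat.ModEq.cancel_right_of_coprime (by rwa [Nat.gcd_comm]) hmod
  rwa [Nat.ModEq, Nat.mod_eq_of_lt h1, Nat.mod_eq_of_lt h2] at this

lemma coprime_s_n {s t : ℕ} (hgcd : Nat.gcd s t = 1) : Nat.gcd s (s + t) = 1 := by
  rw [add_comm, Nat.gcd_add_self_right]; exact hgcd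

/-- Surjectivity of the cut map onto `[1, n)`. -/
lemma exists_cut {s t : ℕ} (hs : 0 < s) (ht : 0 < t) (hgcd : Nat.gcd s t = 1)
    {v : ℕ} (hv0 : 0 < v) (hv : v < s + t) :
    ∃ k, 0 < k ∧ k < s + t ∧ k * s % (s + t) = v := by
  have hn : 0 < s + t := by omega
  have hco := coprime_s_n hgcd
  set f : Fin (s + t) → Fin (s + t) :=
    fun j => ⟨j.val * s % (s + t), Nat.mod_lt _ hn⟩ with hf
  have hinj : Function.Injective f := by
    intro a b hab
    exact Fin.ext (cut_inj hco a.isLt b.isLt (by simpa [hf] using congrArg Fin.val hab))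
  have hsurj : Function.Surjective f := Finite.surjective_of_injective hinj
  obtain ⟨j, hj⟩ := hsurj ⟨v, hv⟩
  have hjv : j.val * s % (s + t) = v := congrArg Fin.val hj
  refine ⟨j.val, ?_, j.isLt, hjv⟩
  rcases Nat.eq_zero_or_pos j.val with h0 | h0
  · simp [h0] at hjv; omega
  · exact h0

end WsatPathAux

namespace WsatPathAux

/-- The graph after `k` steps of the saturation process: the complement of the path,
together with the path edges `(j*s % n - 1, j*s % n)` for `1 ≤ j ≤ k`. Equivalently,
the only missing edges are those corresponding to `k < j < n`. -/
def midG (s t k : ℕ) : SimpleGraph (Fin (s + t)) where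
  Adj u v := u ≠ v ∧ ∀ j, k < j → j < s + t →
    ¬(u.val + 1 = v.val ∧ v.val = j * s % (s + t)) ∧
    ¬(v.val + 1 = u.val ∧ u.val = j * s % (s + t))
  symm := by
    constructor; rintro u v ⟨h1, h2⟩
    exact ⟨Ne.symm h1, fun j hj hj' => ⟨(h2 j hj hj').2, (h2 j hj hj').1⟩⟩
  loopless := ⟨fun v h => h.1 rfl⟩

lemma midG_adj {s t k : ℕ} {u v : Fin (s + t)} :
    (midG s t k).Adj u v ↔ u ≠ v ∧ ∀ j, k < j → j < s + t →
      ¬(u.val + 1 = v.val ∧ v.val = j * s % (s + t)) ∧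
      ¬(v.val + 1 = u.val ∧ u.val = j * s % (s + t)) := Iff.rfl

lemma midG_zero {s t : ℕ} (hs : 0 < s) (ht : 0 < t) (hgcd : Nat.gcd s t = 1) :
    midG s t 0 = (pathGraph (s + t))ᶜ := by
  ext u v
  rw [midG_adj, compl_adj, pathGraph_adj]
  constructor
  · rintro ⟨hne, hall⟩
    refine ⟨hne, ?_⟩
    rintro (h1 | h1)
    · obtain ⟨j, hj0, hjn, hjv⟩ := exists_cut hs ht hgcd (by omega : 0 < v.val) v.isLt
      exact (hall j hj0 hjn).1 ⟨h1, hjv.symm⟩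
    · obtain ⟨j, hj0, hjn, hjv⟩ := exists_cut hs ht hgcd (by omega : 0 < u.val) u.isLt
      exact (hall j hj0 hjn).2 ⟨h1, hjv.symm⟩
  · rintro ⟨hne, hnadj⟩
    exact ⟨hne, fun j _ _ => ⟨fun h => hnadj (Or.inl h.1), fun h => hnadj (Or.inr h.1)⟩⟩

lemma midG_last {s t : ℕ} (hs : 0 < s) (ht : 0 < t) :
    midG s t (s + t - 1) = ⊤ := by
  ext u v
  rw [midG_adj, top_adj]
  constructor
  · exact fun h => h.1
  · exact fun h => ⟨h, fun j hj hj' => absurd hj' (by omega)⟩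

end WsatPathAux

namespace WsatPathAux

lemma succ_mod_eq {n a b : ℕ} (hb : b < n) (h : a % n + 1 = b) : (a + 1) % n = b := by
  have h1 : 1 < n := by omega
  rw [Nat.add_mod, Nat.mod_eq_of_lt h1, h, Nat.mod_eq_of_lt hb]

/-- The two sides of any not-yet-added cut edge lie on the same side of the
bipartition used at step `k`; equivalently, every cross pair of the bipartition is
adjacent in `midG s t k`. -/
lemma copy_adj {s t : ℕ} (hs : 0 < s) (ht : 0 < t) (hgcd : Nat.gcd s t = 1)
    {k : ℕ} (hk1 : 1 ≤ k) (hkn : k < s + t) (i : Fin s) (j : Fin t) :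
    (midG s t k).Adj ⟨(k * s + (t + i.val)) % (s + t), Nat.mod_lt _ (by omega)⟩
      ⟨(k * s + j.val) % (s + t), Nat.mod_lt _ (by omega)⟩ := by
  have hco := coprime_s_n hgcd
  have hiv := i.isLt
  have hjv := j.isLt
  rw [midG_adj]
  constructor
  · intro hxy
    have e : (k * s + (t + i.val)) % (s + t) = (k * s + j.val) % (s + t) :=
      congrArg Fin.val hxy
    have := modeq_cancel (show t + i.val < s + t by omega) (show j.val < s + t by omega) e
    omega
  · intro m hm hmn
    constructor
    · rintro ⟨h1, h2⟩
      simp only at h1 h2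
      -- h1 : (k*s + (t+i))%n + 1 = (k*s + j)%n
      have e1 : (k * s + (t + i.val) + 1) % (s + t) = (k * s + j.val) % (s + t) :=
        succ_mod_eq (Nat.mod_lt _ (by omega)) h1
      have e1' : (k * s + (t + i.val + 1)) % (s + t) = (k * s + j.val) % (s + t) := by
        rw [show k * s + (t + i.val + 1) = k * s + (t + i.val) + 1 by ring]; exact e1
      rcases modeq_cancel_le (show t + i.val + 1 ≤ s + t by omega)
        (show j.val < s + t by omega) e1' with h | ⟨hti, hj0⟩
      · omega
      · -- i = s-1, j = 0 : then the cut value forces m = k, contradicting k < m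
        rw [hj0] at h2
        have : m = k := cut_inj hco hmn hkn (by rw [← h2, Nat.add_zero])
        omega
    · rintro ⟨h1, h2⟩
      simp only at h1 h2
      have e1 : (k * s + j.val + 1) % (s + t) = (k * s + (t + i.val)) % (s + t) :=
        succ_mod_eq (Nat.mod_lt _ (by omega)) h1
      have e1' : (k * s + (j.val + 1)) % (s + t) = (k * s + (t + i.val)) % (s + t) := by
        rw [show k * s + (j.val + 1) = k * s + j.val + 1 by ring]; exact e1
      have heq := modeq_cancel (show j.val + 1 < s + t by omega)
        (show t + i.val < s + t by omega) e1'
      -- forces i = 0 and j = t - 1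
      have hi0 : i.val = 0 := by omega
      -- h2 : (k*s + (t + i))%n = m*s%n ; with i = 0
      have h3 : (m * s) % (s + t) = (k * s + t) % (s + t) := by
        rw [← h2]; congr 1; omega
      have h4 : ((m + 1) * s) % (s + t) = ((k * s + t) + s) % (s + t) := by
        have hms : m * s ≡ k * s + t [MOD s + t] := h3
        have := hms.add_right s
        simpa [add_mul, one_mul, Nat.ModEq] using this
      have h5 : ((m + 1) * s) % (s + t) = (k * s) % (s + t) := by
        rw [h4, show k * s + t + s = k * s + (s + t) by ring, Nat.add_mod_right]
      have h6 : (m + 1) ≡ k [MOD s + t] :=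
        Nat.ModEq.cancel_right_of_coprime (by rwa [Nat.gcd_comm]) h5
      rw [Nat.ModEq, Nat.mod_eq_of_lt (show k < s + t from hkn)] at h6
      rcases lt_or_eq_of_le (show m + 1 ≤ s + t by omega) with hlt | heqn
      · rw [Nat.mod_eq_of_lt hlt] at h6; omega
      · rw [heqn, Nat.mod_self] at h6
        omega

end WsatPathAux

namespace WsatPathAux

lemma cut_pos {s t : ℕ} (hs : 0 < s) (ht : 0 < t) (hgcd : Nat.gcd s t = 1)
    {k : ℕ} (hk1 : 1 ≤ k) (hkn : k < s + t) : 0 < k * s % (s + t) := by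
  rcases Nat.eq_zero_or_pos (k * s % (s + t)) with h0 | h
  · exfalso
    have : k = 0 := cut_inj (coprime_s_n hgcd) hkn (by omega)
      (by rw [h0, Nat.zero_mul, Nat.zero_mod])
    omega
  · exact h

lemma satStep_midG {s t : ℕ} (hs : 0 < s) (ht : 0 < t) (hgcd : Nat.gcd s t = 1)
    {k : ℕ} (hk1 : 1 ≤ k) (hkn : k < s + t) :
    SatStep (Kst s t) (midG s t (k - 1)) (midG s t k) := by
  have hco := coprime_s_n hgcd
  have hcn : k * s % (s + t) < s + t := Nat.mod_lt _ (by omega)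
  have hc0 : 0 < k * s % (s + t) := cut_pos hs ht hgcd hk1 hkn
  set a0 : Fin (s + t) := ⟨k * s % (s + t) - 1, by omega⟩ with ha0
  set a1 : Fin (s + t) := ⟨k * s % (s + t), hcn⟩ with ha1
  have ha0v : a0.val = k * s % (s + t) - 1 := rfl
  have ha1v : a1.val = k * s % (s + t) := rfl
  have hne01 : a0 ≠ a1 := by
    intro h
    have := congrArg Fin.val h
    rw [ha0v, ha1v] at this; omega
  refine ⟨s(a0, a1), ?_, ?_, ?_⟩
  · -- the edge is missing from `midG s t (k-1)`
    rw [mem_edgeSet, compl_adj]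
    refine ⟨hne01, ?_⟩
    rintro ⟨-, hall⟩
    exact (hall k (by omega) hkn).1 ⟨by rw [ha0v, ha1v]; omega, ha1v⟩
  · -- the graph equation
    ext u v
    rw [midG_adj, sup_adj, midG_adj, fromEdgeSet_adj, Set.mem_singleton_iff]
    constructor
    · rintro ⟨hne, hall⟩
      by_cases hcut : (u.val + 1 = v.val ∧ v.val = k * s % (s + t)) ∨
          (v.val + 1 = u.val ∧ u.val = k * s % (s + t))
      · right
        refine ⟨?_, hne⟩
        rcases hcut with ⟨h1, h2⟩ | ⟨h1, h2⟩
        · have hu : u = a0 := Fin.ext (by rw [ha0v]; omega)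
          have hv : v = a1 := Fin.ext (by rw [ha1v]; omega)
          rw [hu, hv]
        · have hu : u = a1 := Fin.ext (by rw [ha1v]; omega)
          have hv : v = a0 := Fin.ext (by rw [ha0v]; omega)
          rw [hu, hv, Sym2.eq_swap]
      · left
        refine ⟨hne, fun j hj hjn => ?_⟩
        by_cases hjk : j = k
        · subst hjk
          exact ⟨fun h => hcut (Or.inl h), fun h => hcut (Or.inr h)⟩
        · exact hall j (by omega) hjn
    · rintro (⟨hne, hall⟩ | ⟨he, hne⟩)
      · exact ⟨hne, fun j hj hjn => hall j (by omega) hjn⟩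
      · have key : ∀ j, k < j → j < s + t →
            ¬(a0.val + 1 = a1.val ∧ a1.val = j * s % (s + t)) ∧
            ¬(a1.val + 1 = a0.val ∧ a0.val = j * s % (s + t)) := by
          intro m hm hmn
          constructor
          · rintro ⟨h1, h2⟩
            rw [ha1v] at h2
            have : m = k := cut_inj hco hmn hkn h2.symm
            omega
          · rintro ⟨h1, h2⟩
            rw [ha0v, ha1v] at h1
            omega
        rw [Sym2.eq_iff] at he
        rcases he with ⟨hu, hv⟩ | ⟨hu, hv⟩
        · subst hu; subst hv; exact ⟨hne, key⟩
        · subst hu; subst hv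
          exact ⟨hne, fun j hj hjn => ⟨(key j hj hjn).2, (key j hj hjn).1⟩⟩
  · -- the new copy of K_{s,t}
    refine ⟨⟨fun x => match x with
      | Sum.inl i => ⟨(k * s + (t + i.val)) % (s + t), Nat.mod_lt _ (by omega)⟩
      | Sum.inr j => ⟨(k * s + j.val) % (s + t), Nat.mod_lt _ (by omega)⟩, ?_⟩, ?_, ?_⟩
    · -- injectivity
      rintro (i1 | j1) (i2 | j2) hxy <;>
        simp only [Fin.mk.injEq, Sum.inl.injEq, Sum.inr.injEq] at hxy ⊢
      · have := modeq_cancel (show t + i1.val < s + t by omega)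
          (show t + i2.val < s + t by omega) hxy
        exact Fin.ext (by omega)
      · have := modeq_cancel (show t + i1.val < s + t by omega)
          (show j2.val < s + t by omega) hxy
        exact absurd this (by omega)
      · have := modeq_cancel (show j1.val < s + t by omega)
          (show t + i2.val < s + t by omega) hxy
        exact absurd this (by omega)
      · have := modeq_cancel (show j1.val < s + t by omega)
          (show j2.val < s + t by omega) hxy
        exact Fin.ext (by omega)
    · -- adjacency of cross pairs
      rintro (i1 | j1) (i2 | j2) hab
      · simp [Kst] at hab
      · exact copy_adj hs ht hgcd hk1 hkn i1 j2
      · exact (copy_adj hs ht hgcd hk1 hkn i2 j1).symm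
      · simp [Kst] at hab
    · -- the new edge is covered
      refine ⟨Sum.inl ⟨s - 1, by omega⟩, Sum.inr ⟨0, ht⟩, by simp [Kst], ?_⟩
      have hleft : ((k * s + (t + (s - 1))) % (s + t) : ℕ) = a0.val := by
        rw [ha0v, show k * s + (t + (s - 1)) = k * s + (s + t - 1) by omega, Nat.add_mod,
          Nat.mod_eq_of_lt (show s + t - 1 < s + t by omega),
          show k * s % (s + t) + (s + t - 1) = (k * s % (s + t) - 1) + (s + t) by omega,
          Nat.add_mod_right, Nat.mod_eq_of_lt (by omega)]
      have hright : ((k * s + 0) % (s + t) : ℕ) = a1.val := by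
        rw [ha1v, Nat.add_zero]
      show s((⟨(k * s + (t + (s - 1))) % (s + t), _⟩ : Fin (s + t)),
        (⟨(k * s + 0) % (s + t), _⟩ : Fin (s + t))) = s(a0, a1)
      rw [show (⟨(k * s + (t + (s - 1))) % (s + t), _⟩ : Fin (s + t)) = a0 from Fin.ext hleft,
        show (⟨(k * s + 0) % (s + t), _⟩ : Fin (s + t)) = a1 from Fin.ext hright]

end WsatPathAux

namespace WsatPathAux

lemma not_hasCopy {s t : ℕ} (hs : 0 < s) (ht : 0 < t) :
    ¬ HasCopy (Kst s t) (pathGraph (s + t))ᶜ := by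
  rintro ⟨f, hf⟩
  have hcard : Fintype.card (Fin s ⊕ Fin t) = Fintype.card (Fin (s + t)) := by simp
  have hbij : Function.Bijective f :=
    (Fintype.bijective_iff_injective_and_card f).mpr ⟨f.injective, hcard⟩
  set P : Fin (s + t) → Prop := fun w => ∃ i : Fin s, f (Sum.inl i) = w with hP
  have hstep : ∀ m : ℕ, (h1 : m + 1 < s + t) →
      (P ⟨m, by omega⟩ ↔ P ⟨m + 1, h1⟩) := by
    intro m h1
    obtain ⟨x, hx⟩ := hbij.2 ⟨m, by omega⟩
    obtain ⟨y, hy⟩ := hbij.2 ⟨m + 1, h1⟩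
    have hadj : ¬ (pathGraph (s + t))ᶜ.Adj ⟨m, by omega⟩ ⟨m + 1, h1⟩ := by
      rintro ⟨-, hn⟩
      exact hn (pathGraph_adj.mpr (Or.inl rfl))
    constructor
    · rintro ⟨i, hi⟩
      cases y with
      | inl i' => exact ⟨i', hy⟩
      | inr j' =>
        exfalso
        have hadj' := hf (Sum.inl i) (Sum.inr j') (by simp [Kst])
        rw [hi, hy] at hadj'
        exact hadj hadj'
    · rintro ⟨i, hi⟩
      cases x with
      | inl i' => exact ⟨i', hx⟩
      | inr j' =>
        exfalso
        have hadj' := hf (Sum.inl i) (Sum.inr j') (by simp [Kst])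
        rw [hi, hx] at hadj'
        exact hadj hadj'.symm
  have hall : ∀ m : ℕ, (h : m < s + t) → (P ⟨m, h⟩ ↔ P ⟨0, by omega⟩) := by
    intro m
    induction m with
    | zero => intro h; exact Iff.rfl
    | succ m ih =>
      intro h
      rw [← hstep m h]
      exact ih (by omega)
  have h1 : P (f (Sum.inl ⟨0, hs⟩)) := ⟨_, rfl⟩
  have h2 : ¬ P (f (Sum.inr ⟨0, ht⟩)) := by
    rintro ⟨i, hi⟩
    exact absurd (f.injective hi) (by simp)
  have e1 := hall (f (Sum.inl ⟨0, hs⟩)).val (f (Sum.inl ⟨0, hs⟩)).isLt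
  have e2 := hall (f (Sum.inr ⟨0, ht⟩)).val (f (Sum.inr ⟨0, ht⟩)).isLt
  rw [Fin.eta] at e1 e2
  exact h2 (e2.mpr (e1.mp h1))

lemma ncard_compl_path {s t : ℕ} (hs : 0 < s) (ht : 0 < t) :
    ((pathGraph (s + t))ᶜ).edgeSet.ncard = (s + t - 1).choose 2 := by
  classical
  have hn : 2 ≤ s + t := by omega
  set g : ℕ → Sym2 (Fin (s + t)) := fun v =>
    s((⟨(v - 1) % (s + t), Nat.mod_lt _ (by omega)⟩ : Fin (s + t)),
      (⟨v % (s + t), Nat.mod_lt _ (by omega)⟩ : Fin (s + t))) with hg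
  have hpath : (pathGraph (s + t)).edgeSet = g '' Set.Ico 1 (s + t) := by
    ext e
    induction e using Sym2.ind with
    | _ u v =>
      rw [mem_edgeSet, pathGraph_adj]
      constructor
      · rintro (h | h)
        · refine ⟨v.val, Set.mem_Ico.mpr ⟨by omega, v.isLt⟩, ?_⟩
          simp only [hg]
          rw [show (⟨(v.val - 1) % (s + t), Nat.mod_lt _ (by omega)⟩ : Fin (s + t)) = u from
              Fin.ext (by show (v.val - 1) % (s + t) = u.val; rw [Nat.mod_eq_of_lt (show v.val - 1 < s + t by omega)]; omega),
            show (⟨v.val % (s + t), Nat.mod_lt _ (by omega)⟩ : Fin (s + t)) = v from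
              Fin.ext (Nat.mod_eq_of_lt v.isLt)]
        · refine ⟨u.val, Set.mem_Ico.mpr ⟨by omega, u.isLt⟩, ?_⟩
          simp only [hg]
          rw [show (⟨(u.val - 1) % (s + t), Nat.mod_lt _ (by omega)⟩ : Fin (s + t)) = v from
              Fin.ext (by show (u.val - 1) % (s + t) = v.val; rw [Nat.mod_eq_of_lt (show u.val - 1 < s + t by omega)]; omega),
            show (⟨u.val % (s + t), Nat.mod_lt _ (by omega)⟩ : Fin (s + t)) = u from
              Fin.ext (Nat.mod_eq_of_lt u.isLt), Sym2.eq_swap]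
      · rintro ⟨w, hw, hgw⟩
        obtain ⟨hw1, hw2⟩ := Set.mem_Ico.mp hw
        have hadj : (pathGraph (s + t)).Adj ⟨(w - 1) % (s + t), Nat.mod_lt _ (by omega)⟩
            ⟨w % (s + t), Nat.mod_lt _ (by omega)⟩ := by
          rw [pathGraph_adj]
          left
          show (w - 1) % (s + t) + 1 = w % (s + t)
          rw [Nat.mod_eq_of_lt (show w - 1 < s + t by omega), Nat.mod_eq_of_lt hw2]
          omega
        have h3 : s(u, v) ∈ (pathGraph (s + t)).edgeSet := by
          rw [← hgw, mem_edgeSet]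
          exact hadj
        rw [mem_edgeSet, pathGraph_adj] at h3
        exact h3
  have hinj : Set.InjOn g (Set.Ico 1 (s + t)) := by
    intro v hv w hw h
    obtain ⟨hv1, hv2⟩ := Set.mem_Ico.mp hv
    obtain ⟨hw1, hw2⟩ := Set.mem_Ico.mp hw
    rw [hg] at h
    simp only [Sym2.eq_iff, Fin.mk.injEq] at h
    rw [Nat.mod_eq_of_lt (show v - 1 < s + t by omega),
      Nat.mod_eq_of_lt (show w - 1 < s + t by omega),
      Nat.mod_eq_of_lt hv2, Nat.mod_eq_of_lt hw2] at h
    omega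
  have hdecomp : ((pathGraph (s + t))ᶜ).edgeSet =
      (⊤ : SimpleGraph (Fin (s + t))).edgeSet \ (pathGraph (s + t)).edgeSet := by
    ext e
    induction e using Sym2.ind with
    | _ u v =>
      simp only [mem_edgeSet, compl_adj, top_adj, Set.mem_diff]
  rw [hdecomp, Set.ncard_diff (edgeSet_mono le_top) (Set.toFinite _)]
  have htop : (⊤ : SimpleGraph (Fin (s + t))).edgeSet.ncard = (s + t).choose 2 := by
    rw [Set.ncard_eq_toFinset_card']
    have := card_edgeFinset_top_eq_card_choose_two (V := Fin (s + t))
    rw [Fintype.card_fin] at this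
    exact this
  have hpc : (pathGraph (s + t)).edgeSet.ncard = s + t - 1 := by
    rw [hpath, Set.ncard_image_of_injOn hinj, ← Finset.coe_Ico, Set.ncard_coe_finset,
      Nat.card_Ico]
  rw [htop, hpc]
  obtain ⟨m, hm⟩ : ∃ m, s + t = m + 1 := ⟨s + t - 1, by omega⟩
  rw [hm]
  have hsplit : (m + 1).choose 2 = m.choose 1 + m.choose 2 := Nat.choose_succ_succ' m 1
  rw [Nat.choose_one_right] at hsplit
  simp only [Nat.add_sub_cancel]
  omega

end WsatPathAux

theorem wsat_upper_bound_coprime (s t : ℕ) (hs : 0 < s) (ht : 0 < t)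
    (hgcd : Nat.gcd s t = 1) :
    WeaklySat (Kst s t) (SimpleGraph.pathGraph (s + t))ᶜ ∧
    wsat (s + t) (Kst s t) ≤ (s + t - 1).choose 2 := by
  open WsatPathAux in
  have hreach : SatReaches (Kst s t) ((pathGraph (s + t))ᶜ) ⊤ := by
    have key : ∀ k, k ≤ s + t - 1 →
        SatReaches (Kst s t) (midG s t 0) (midG s t k) := by
      intro k
      induction k with
      | zero => exact fun _ => Relation.ReflTransGen.refl
      | succ m ih =>
        intro h
        refine Relation.ReflTransGen.tail (ih (by omega)) ?_
        have hstep := satStep_midG hs ht hgcd (k := m + 1) (by omega) (by omega)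
        simpa using hstep
    have h := key (s + t - 1) le_rfl
    rwa [midG_zero hs ht hgcd, midG_last hs ht] at h
  have hws : WeaklySat (Kst s t) ((pathGraph (s + t))ᶜ) :=
    ⟨not_hasCopy hs ht, hreach⟩
  exact ⟨hws, Nat.sInf_le ⟨_, hws, ncard_compl_path hs ht⟩⟩
end

section
/- Let F be a graph with minimum degree δ(F) ≥ 1 and let G be a weakly F-saturated graph with |V(G)| ≥ |V(F)| - 1. If a new vertex v is joined to δ(F) - 1 arbitrary vertices of G, the resulting graph is also weakly F-saturated. -/
open SimpleGraph

/-- The graph obtained from `G` by adding a new vertex joined to the vertices in `S`. -/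
def addVertex {V : Type*} (G : SimpleGraph V) (S : Set V) : SimpleGraph (Option V) where
  Adj a b :=
    match a, b with
    | some x, some y => G.Adj x y
    | some x, none => x ∈ S
    | none, some y => y ∈ S
    | none, none => False
  symm := by
    constructor
    rintro (_ | x) (_ | y) h
    · exact h
    · exact h
    · exact h
    · exact G.adj_symm h
  loopless := by
    constructor
    rintro (_ | x) h
    · exact h
    · exact G.irrefl h

section AuxProof

variable {α V : Type*}

@[simp] lemma addVertex_adj_some_some {G : SimpleGraph V} {S : Set V} {x y : V} :
    (addVertex G S).Adj (some x) (some y) ↔ G.Adj x y := Iff.rfl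

@[simp] lemma addVertex_adj_none_some {G : SimpleGraph V} {S : Set V} {y : V} :
    (addVertex G S).Adj none (some y) ↔ y ∈ S := Iff.rfl

@[simp] lemma addVertex_adj_some_none {G : SimpleGraph V} {S : Set V} {x : V} :
    (addVertex G S).Adj (some x) none ↔ x ∈ S := Iff.rfl

@[simp] lemma addVertex_adj_none_none {G : SimpleGraph V} {S : Set V} :
    ¬ (addVertex G S).Adj none none := fun h => h

lemma addVertex_sup_edge (H : SimpleGraph V) (S : Set V) (x y : V) :
    addVertex (H ⊔ SimpleGraph.fromEdgeSet {s(x, y)}) S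
      = addVertex H S ⊔ SimpleGraph.fromEdgeSet {s(Option.some x, Option.some y)} := by
  ext a b
  rcases a with _ | a <;> rcases b with _ | b <;>
    simp [addVertex, SimpleGraph.fromEdgeSet_adj, Sym2.eq_iff]

lemma addVertex_top_univ : addVertex (⊤ : SimpleGraph V) (Set.univ) = ⊤ := by
  ext a b
  rcases a with _ | a <;> rcases b with _ | b <;> simp [addVertex]

lemma satStep_addVertex {F : SimpleGraph α} {S : Set V} {H H' : SimpleGraph V}
    (h : SatStep F H H') : SatStep F (addVertex H S) (addVertex H' S) := by
  obtain ⟨e, he, heq, f, hf, a, b, hab, hfe⟩ := h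
  obtain ⟨⟨x, y⟩, rfl⟩ := e.exists_rep
  refine ⟨s(Option.some x, Option.some y), ?_, ?_, ?_⟩
  · rw [SimpleGraph.mem_edgeSet] at he ⊢
    rw [SimpleGraph.compl_adj] at he ⊢
    exact ⟨by simpa using he.1, he.2⟩
  · rw [heq, addVertex_sup_edge]
  · refine ⟨f.trans Function.Embedding.some, fun a' b' hab' => ?_, a, b, hab, ?_⟩
    · simpa using hf a' b' hab'
    · have := congrArg (Sym2.map Option.some) hfe
      simpa using this

lemma free_addVertex [Fintype α] [Nonempty α] (F : SimpleGraph α) [DecidableRel F.Adj]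
    (hδ : 1 ≤ F.minDegree) (G : SimpleGraph V) (S : Finset V)
    (hS : S.card = F.minDegree - 1) (hfree : ¬ HasCopy F G) :
    ¬ HasCopy F (addVertex G (S : Set V)) := by
  classical
  rintro ⟨f, hf⟩
  by_cases hnone : ∃ a, f a = none
  · obtain ⟨a, ha⟩ := hnone
    have hsub : (F.neighborFinset a).image f ⊆ S.image some := by
      intro z hz
      simp only [Finset.mem_image, SimpleGraph.mem_neighborFinset] at hz
      obtain ⟨y, hy, rfl⟩ := hz
      have := hf a y hy
      rw [ha] at this
      rcases hfy : f y with _ | v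
      · rw [hfy] at this; exact absurd this (fun h => h)
      · rw [hfy] at this
        exact Finset.mem_image_of_mem some this
    have h1 : F.degree a ≤ S.card := by
      calc F.degree a = ((F.neighborFinset a).image f).card := by
            rw [Finset.card_image_of_injective _ f.injective]; rfl
        _ ≤ (S.image some).card := Finset.card_le_card hsub
        _ ≤ S.card := Finset.card_image_le
    have h2 : F.minDegree ≤ F.degree a := F.minDegree_le_degree a
    omega
  · push_neg at hnone
    have hsome : ∀ a, (f a).isSome := fun a => Option.isSome_iff_ne_none.mpr (hnone a)
    refine hfree ⟨⟨fun a => (f a).get (hsome a), fun a b hab => ?_⟩, fun a b hab => ?_⟩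
    · apply f.injective
      rw [← Option.some_get (hsome a), ← Option.some_get (hsome b)]
      exact congrArg some hab
    · have := hf a b hab
      rw [← Option.some_get (hsome a), ← Option.some_get (hsome b)] at this
      exact this

lemma copyAt_step [Fintype α] [Nonempty α] [Fintype V] [DecidableEq α] [DecidableEq V]
    (F : SimpleGraph α) [DecidableRel F.Adj]
    (hδ : 1 ≤ F.minDegree) (hcard : Fintype.card α - 1 ≤ Fintype.card V)
    (T : Finset V) (hT : F.minDegree - 1 ≤ T.card) (w : V) (hw : w ∉ T) :
    CopyAt F (addVertex ⊤ ((insert w T : Finset V) : Set V)) s(Option.none, Option.some w) := by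
  obtain ⟨a, ha⟩ := F.exists_minimal_degree_vertex
  set δ := F.minDegree with hδdef
  set N := F.neighborFinset a with hNdef
  have hNcard : N.card = δ := by
    rw [hNdef, SimpleGraph.card_neighborFinset_eq_degree, ha]
  have haN : a ∉ N := by simp [hNdef]
  obtain ⟨b, hb⟩ : N.Nonempty := Finset.card_pos.mp (by omega)
  have hba : b ≠ a := fun h => haN (h ▸ hb)
  obtain ⟨S', hS'T, hS'card⟩ := Finset.exists_subset_card_eq (show δ - 1 ≤ T.card from hT)
  have hwS' : w ∉ S' := fun h => hw (hS'T h)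
  have hcard1 : (N.erase b).card = S'.card := by
    rw [Finset.card_erase_of_mem hb, hS'card, hNcard]
  set g1 := Finset.equivOfCardEq hcard1 with hg1
  set R := (Finset.univ : Finset α) \ insert a N with hRdef
  set W := (Finset.univ : Finset V) \ insert w S' with hWdef
  have hRcard : R.card = Fintype.card α - (δ + 1) := by
    rw [hRdef, Finset.card_sdiff_of_subset (Finset.subset_univ _), Finset.card_univ,
      Finset.card_insert_of_notMem haN, hNcard]
  have hWcard : W.card = Fintype.card V - δ := by
    rw [hWdef, Finset.card_sdiff_of_subset (Finset.subset_univ _), Finset.card_univ,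
      Finset.card_insert_of_notMem hwS', hS'card]
    omega
  have hRW : R.card ≤ W.card := by omega
  obtain ⟨W', hW'W, hW'card⟩ := Finset.exists_subset_card_eq hRW
  set g2 := Finset.equivOfCardEq hW'card.symm with hg2
  have hmemR : ∀ x, x ≠ a → x ≠ b → x ∉ N.erase b → x ∈ R := by
    intro x hxa hxb hxN
    rw [hRdef, Finset.mem_sdiff]
    refine ⟨Finset.mem_univ _, ?_⟩
    rw [Finset.mem_insert]
    push_neg
    exact ⟨hxa, fun hxinN => hxN (Finset.mem_erase.mpr ⟨hxb, hxinN⟩)⟩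
  set f : α → Option V := fun x =>
    if hxa : x = a then none
    else if hxb : x = b then some w
    else if hxN : x ∈ N.erase b then some ((g1 ⟨x, hxN⟩ : {y // y ∈ S'}) : V)
    else some ((g2 ⟨x, hmemR x hxa hxb hxN⟩ : {y // y ∈ W'}) : V)
    with hfdef
  have hg1S : ∀ p, ((g1 p : {y // y ∈ S'}) : V) ∈ S' := fun p => (g1 p).2
  have hg2W : ∀ p, ((g2 p : {y // y ∈ W'}) : V) ∉ insert w S' := by
    intro p
    have h1 : ((g2 p : {y // y ∈ W'}) : V) ∈ W := hW'W (g2 p).2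
    rw [hWdef, Finset.mem_sdiff] at h1
    exact h1.2
  have hg1w : ∀ p, ((g1 p : {y // y ∈ S'}) : V) ≠ w := fun p h => hwS' (h ▸ hg1S p)
  have hg2w : ∀ p, ((g2 p : {y // y ∈ W'}) : V) ≠ w :=
    fun p h => hg2W p (h ▸ Finset.mem_insert_self w S')
  have hg2S : ∀ p, ((g2 p : {y // y ∈ W'}) : V) ∉ S' :=
    fun p h => hg2W p (Finset.mem_insert_of_mem h)
  have hclass : ∀ x, x ≠ a → (x = b ∧ f x = some w) ∨
      (∃ p : {y // y ∈ N.erase b}, x = ↑p ∧ f x = some ((g1 p : {y // y ∈ S'}) : V)) ∨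
      (∃ p : {y // y ∈ R}, x = ↑p ∧ f x = some ((g2 p : {y // y ∈ W'}) : V)) := by
    intro x hx
    by_cases hxb : x = b
    · exact Or.inl ⟨hxb, (dif_neg hx).trans (dif_pos hxb)⟩
    · by_cases hxN : x ∈ N.erase b
      · exact Or.inr (Or.inl ⟨⟨x, hxN⟩, rfl,
          (dif_neg hx).trans ((dif_neg hxb).trans (dif_pos hxN))⟩)
      · exact Or.inr (Or.inr ⟨⟨x, hmemR x hx hxb hxN⟩, rfl,
          (dif_neg hx).trans ((dif_neg hxb).trans (dif_neg hxN))⟩)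
  have hfa : f a = none := dif_pos rfl
  have hfb : f b = some w := (dif_neg hba).trans (dif_pos rfl)
  have hsome : ∀ x, x ≠ a → ∃ v, f x = some v := by
    intro x hx
    rcases hclass x hx with ⟨_, h⟩ | ⟨p, _, h⟩ | ⟨p, _, h⟩ <;> exact ⟨_, h⟩
  have hinj : Function.Injective f := by
    intro x y hxy
    by_cases hxa : x = a <;> by_cases hya : y = a
    · exact hxa.trans hya.symm
    · obtain ⟨v, hv⟩ := hsome y hya
      rw [hxa, hfa, hv] at hxy
      exact nomatch hxy
    · obtain ⟨v, hv⟩ := hsome x hxa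
      rw [hya, hfa, hv] at hxy
      exact nomatch hxy
    · rcases hclass x hxa with ⟨hxb, hfx⟩ | ⟨p, hxp, hfx⟩ | ⟨p, hxp, hfx⟩ <;>
        rcases hclass y hya with ⟨hyb, hfy⟩ | ⟨q, hyq, hfy⟩ | ⟨q, hyq, hfy⟩ <;>
        rw [hfx, hfy] at hxy <;>
        have hval := Option.some_injective _ hxy
      · exact hxb.trans hyb.symm
      · exact absurd hval.symm (hg1w q)
      · exact absurd hval.symm (hg2w q)
      · exact absurd hval (hg1w p)
      · exact hxp.trans ((congrArg Subtype.val (g1.injective (Subtype.ext hval))).trans hyq.symm)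
      · exact absurd (hval ▸ hg1S p) (hg2S q)
      · exact absurd hval (hg2w p)
      · exact absurd (hval.symm ▸ hg1S q) (hg2S p)
      · exact hxp.trans ((congrArg Subtype.val (g2.injective (Subtype.ext hval))).trans hyq.symm)
  have hkey : ∀ y, y ≠ a → ∃ v, f y = some v ∧ (y ∈ N → v ∈ insert w T) := by
    intro y hy
    rcases hclass y hy with ⟨hyb, hfy⟩ | ⟨p, hyp, hfy⟩ | ⟨p, hyp, hfy⟩
    · exact ⟨w, hfy, fun _ => Finset.mem_insert_self w T⟩
    · exact ⟨_, hfy, fun _ => Finset.mem_insert_of_mem (hS'T (hg1S p))⟩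
    · have hpR : (p : α) ∈ Finset.univ \ insert a N := p.2
      exact ⟨_, hfy, fun hyN =>
        absurd (Finset.mem_insert_of_mem (hyp ▸ hyN)) (Finset.mem_sdiff.mp hpR).2⟩
  have hadj : ∀ x y, F.Adj x y →
      (addVertex ⊤ ((insert w T : Finset V) : Set V)).Adj (f x) (f y) := by
    have main : ∀ x y, F.Adj x y → x = a →
        (addVertex ⊤ ((insert w T : Finset V) : Set V)).Adj (f x) (f y) := by
      rintro x y hxy rfl
      obtain ⟨v, hv, hmem⟩ := hkey y hxy.ne'
      rw [hfa, hv]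
      rw [addVertex_adj_none_some, Finset.mem_coe]
      exact hmem (by rw [hNdef, SimpleGraph.mem_neighborFinset]; exact hxy)
    intro x y hxy
    by_cases hxa : x = a
    · exact main x y hxy hxa
    by_cases hya : y = a
    · exact (addVertex _ _).adj_symm (main y x hxy.symm hya)
    obtain ⟨u, hu, _⟩ := hkey x hxa
    obtain ⟨v, hv, _⟩ := hkey y hya
    have hne : f x ≠ f y := fun h => hxy.ne (hinj h)
    rw [hu, hv] at hne ⊢
    rw [addVertex_adj_some_some, SimpleGraph.top_adj]
    exact fun h => hne (by rw [h])
  refine ⟨⟨f, hinj⟩, hadj, a, b, ?_, ?_⟩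
  · rw [← SimpleGraph.mem_neighborFinset, ← hNdef]
    exact hb
  · show s(f a, f b) = _
    rw [hfa, hfb]

lemma reaches_top [Fintype α] [Nonempty α] [Fintype V] [DecidableEq α] [DecidableEq V]
    (F : SimpleGraph α) [DecidableRel F.Adj]
    (hδ : 1 ≤ F.minDegree) (hcard : Fintype.card α - 1 ≤ Fintype.card V) :
    ∀ (n : ℕ) (T : Finset V), F.minDegree - 1 ≤ T.card → Tᶜ.card = n →
      SatReaches F (addVertex ⊤ ((T : Finset V) : Set V)) (⊤ : SimpleGraph (Option V)) := by
  intro n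
  induction n with
  | zero =>
    intro T hT hTc
    have hTuniv : T = Finset.univ := by
      have : Tᶜ = ∅ := Finset.card_eq_zero.mp hTc
      rwa [Finset.compl_eq_empty_iff] at this
    subst hTuniv
    rw [Finset.coe_univ, addVertex_top_univ]
    exact Relation.ReflTransGen.refl
  | succ n ih =>
    intro T hT hTc
    have hne : Tᶜ.Nonempty := by
      rw [← Finset.card_pos, hTc]; omega
    obtain ⟨w, hwc⟩ := hne
    have hwT : w ∉ T := Finset.mem_compl.mp hwc
    have step : SatStep F (addVertex ⊤ ((T : Finset V) : Set V))
        (addVertex ⊤ ((insert w T : Finset V) : Set V)) := by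
      refine ⟨s(Option.none, Option.some w), ?_, ?_, ?_⟩
      · rw [SimpleGraph.mem_edgeSet, SimpleGraph.compl_adj]
        refine ⟨by simp, ?_⟩
        rw [addVertex_adj_none_some, Finset.mem_coe]
        exact hwT
      · ext c d
        rcases c with _ | c <;> rcases d with _ | d <;>
          simp [addVertex, SimpleGraph.fromEdgeSet_adj, Sym2.eq_iff,
            Finset.coe_insert, Set.mem_insert_iff] <;> tauto
      · exact copyAt_step F hδ hcard T hT w hwT
    refine Relation.ReflTransGen.head step (ih (insert w T) ?_ ?_)
    · exact le_trans hT (Finset.card_le_card (Finset.subset_insert w T))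
    · rw [Finset.compl_insert, Finset.card_erase_of_mem hwc, hTc]
      omega

end AuxProof

theorem weaklySat_addVertex {α V : Type*} [Fintype α] [Nonempty α] [Fintype V]
    (F : SimpleGraph α) [DecidableRel F.Adj]
    (hδ : 1 ≤ F.minDegree)
    (G : SimpleGraph V) (hcard : Fintype.card α - 1 ≤ Fintype.card V)
    (S : Finset V) (hS : S.card = F.minDegree - 1)
    (hG : WeaklySat F G) :
    WeaklySat F (addVertex G (S : Set V)) := by
  classical
  constructor
  · exact free_addVertex F hδ G S hS hG.1
  · have h1 : SatReaches F (addVertex G (S : Set V)) (addVertex ⊤ (S : Set V)) :=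
      Relation.ReflTransGen.lift (fun H => addVertex H (S : Set V))
        (fun _ _ h => satStep_addVertex h) _ _ hG.2
    have h2 := reaches_top F hδ hcard (Sᶜ.card) S (by omega) rfl
    exact h1.trans h2
end

section
/- For every two integers n, t with t ≥ 3 even and t+2 ≤ n ≤ 2t-2, wsat(n, K_{2,t}) ≤ n - 1 + C(t,2). -/
open SimpleGraph

section MainProof

open Finset

variable {n t : ℕ}

/-- The construction: vertex `0` joined to everything, and `{1,…,t}` a clique. -/
private def myG (n t : ℕ) : SimpleGraph (Fin n) where
  Adj x y := x ≠ y ∧ (x.val = 0 ∨ y.val = 0 ∨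
    ((1 ≤ x.val ∧ x.val ≤ t) ∧ (1 ≤ y.val ∧ y.val ≤ t)))
  symm := by constructor; intro x y h; exact ⟨h.1.symm, by tauto⟩
  loopless := by constructor; intro x h; exact h.1 rfl

private lemma myG_adj {x y : Fin n} : (myG n t).Adj x y ↔ x ≠ y ∧ (x.val = 0 ∨ y.val = 0 ∨
    ((1 ≤ x.val ∧ x.val ≤ t) ∧ (1 ≤ y.val ∧ y.val ≤ t))) := Iff.rfl

private def Aset (n t : ℕ) : Finset (Fin n) :=
  Finset.univ.filter (fun x : Fin n => 1 ≤ x.val ∧ x.val ≤ t)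

private lemma mem_Aset {x : Fin n} : x ∈ Aset n t ↔ 1 ≤ x.val ∧ x.val ≤ t := by
  simp [Aset]

private lemma card_Aset (htn : t < n) : (Aset n t).card = t := by
  have : (Aset n t).card = (Finset.Icc 1 t).card := by
    apply Finset.card_nbij (fun x => x.val)
    · intro x hx; simp only [Finset.mem_coe, mem_Aset] at hx; simp [Finset.mem_Icc, hx.1, hx.2]
    · intro x hx y hy h; exact Fin.val_injective h
    · intro m hm
      simp only [Finset.coe_Icc, Set.mem_Icc] at hm
      exact ⟨⟨m, lt_of_le_of_lt hm.2 htn⟩, by simp [mem_Aset, hm.1, hm.2], rfl⟩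
  rw [this, Nat.card_Icc]; omega

private lemma zero_not_mem_Aset [NeZero n] : (0 : Fin n) ∉ Aset n t := by
  rw [mem_Aset]
  have : ((0 : Fin n)).val = 0 := Fin.val_zero n
  omega

/-- `0` is adjacent to every other vertex in `myG`. -/
private lemma myG_adj_zero [NeZero n] {x : Fin n} (hx : x ≠ 0) :
    (myG n t).Adj 0 x := by
  refine ⟨hx.symm, Or.inl ?_⟩
  exact Fin.val_zero n

private lemma Aset_adj {x y : Fin n} (hx : x ∈ Aset n t) (hy : y ∈ Aset n t) (hxy : x ≠ y) :
    (myG n t).Adj x y := by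
  rw [mem_Aset] at hx hy
  exact ⟨hxy, Or.inr (Or.inr ⟨hx, hy⟩)⟩

/-- `myG` is `K_{2,t}`-free. -/
private lemma myG_free (ht : 3 ≤ t) (htn : t + 1 < n) : ¬ HasCopy (Kst 2 t) (myG n t) := by
  have hn : 0 < n := by omega
  haveI : NeZero n := ⟨by omega⟩
  rintro ⟨f, hf⟩
  set u := f (Sum.inl 0) with hu
  set w := f (Sum.inl 1) with hw
  have huw : u ≠ w := f.injective.ne (by simp)
  have hadj : ∀ j : Fin t, (myG n t).Adj u (f (Sum.inr j)) ∧ (myG n t).Adj w (f (Sum.inr j)) := by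
    intro j
    constructor
    · exact hf _ _ (by simp [Kst])
    · exact hf _ _ (by simp [Kst])
  set Z : Finset (Fin n) := Finset.univ.image (fun j : Fin t => f (Sum.inr j)) with hZdef
  have hinj : Function.Injective (fun j : Fin t => f (Sum.inr j)) := by
    intro a b h
    have := f.injective h
    simpa using this
  have hZcard : Z.card = t := by
    rw [hZdef, Finset.card_image_of_injective _ hinj, Finset.card_univ, Fintype.card_fin]
  have hZadj : ∀ z ∈ Z, (myG n t).Adj u z ∧ (myG n t).Adj w z := by
    intro z hz
    rw [hZdef] at hz
    obtain ⟨j, _, rfl⟩ := Finset.mem_image.mp hz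
    exact hadj j
  clear_value Z
  -- case analysis
  have hval0 : ∀ z : Fin n, z.val = 0 → z = 0 := fun z h => by
    apply Fin.ext; simpa using h
  have hZne : ∃ z, z ∈ Z := by
    have : 0 < Z.card := by omega
    exact Finset.card_pos.mp this
  by_cases hu0 : u.val = 0
  · -- u = 0; all z ∈ Z are in Aset and adjacent forces w ∈ Aset
    have hw0 : w.val ≠ 0 := fun h => huw ((hval0 u hu0).trans (hval0 w h).symm)
    have hwA : w ∈ Aset n t := by
      obtain ⟨z, hz⟩ := hZne
      obtain ⟨h1, h2⟩ := hZadj z hz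
      have hz0 : z.val ≠ 0 := fun h =>
        h1.ne ((hval0 u hu0).trans (hval0 z h).symm)
      rcases h2.2 with h | h | h
      · exact absurd h hw0
      · exact absurd h hz0
      · exact mem_Aset.mpr h.1
    have hsub : Z ⊆ (Aset n t).erase w := by
      intro z hz
      obtain ⟨h1, h2⟩ := hZadj z hz
      have hz0 : z.val ≠ 0 := by
        intro h
        exact h1.ne ((hval0 u hu0).trans (hval0 z h).symm)
      rcases h2.2 with h | h | h
      · exact absurd h hw0
      · exact absurd h hz0
      · exact Finset.mem_erase.mpr ⟨h2.ne.symm, mem_Aset.mpr h.2⟩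
    have := Finset.card_le_card hsub
    rw [hZcard, Finset.card_erase_of_mem hwA, card_Aset (by omega)] at this
    omega
  · by_cases hw0 : w.val = 0
    · have huA : u ∈ Aset n t := by
        obtain ⟨z, hz⟩ := hZne
        obtain ⟨h1, h2⟩ := hZadj z hz
        have hz0 : z.val ≠ 0 := fun h =>
          h2.ne ((hval0 w hw0).trans (hval0 z h).symm)
        rcases h1.2 with h | h | h
        · exact absurd h hu0
        · exact absurd h hz0
        · exact mem_Aset.mpr h.1
      have hsub : Z ⊆ (Aset n t).erase u := by
        intro z hz
        obtain ⟨h1, h2⟩ := hZadj z hz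
        have hz0 : z.val ≠ 0 := by
          intro h
          exact h2.ne ((hval0 w hw0).trans (hval0 z h).symm)
        rcases h1.2 with h | h | h
        · exact absurd h hu0
        · exact absurd h hz0
        · exact Finset.mem_erase.mpr ⟨h1.ne.symm, mem_Aset.mpr h.2⟩
      have := Finset.card_le_card hsub
      rw [hZcard, Finset.card_erase_of_mem huA, card_Aset (by omega)] at this
      omega
    · -- both u, w nonzero
      by_cases hex : ∃ z ∈ Z, z.val ≠ 0
      · obtain ⟨z₀, hz₀Z, hz₀⟩ := hex
        obtain ⟨h1, h2⟩ := hZadj z₀ hz₀Z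
        have huA : u ∈ Aset n t := by
          rcases h1.2 with h | h | h
          · exact absurd h hu0
          · exact absurd h hz₀
          · exact mem_Aset.mpr h.1
        have hwA : w ∈ Aset n t := by
          rcases h2.2 with h | h | h
          · exact absurd h hw0
          · exact absurd h hz₀
          · exact mem_Aset.mpr h.1
        have hsub : Z ⊆ insert (0 : Fin n) (((Aset n t).erase u).erase w) := by
          intro z hz
          obtain ⟨g1, g2⟩ := hZadj z hz
          by_cases hz0 : z.val = 0
          · exact Finset.mem_insert.mpr (Or.inl (hval0 z hz0))
          · refine Finset.mem_insert.mpr (Or.inr ?_)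
            have hzA : z ∈ Aset n t := by
              rcases g1.2 with h | h | h
              · exact absurd h hu0
              · exact absurd h hz0
              · exact mem_Aset.mpr h.2
            exact Finset.mem_erase.mpr ⟨g2.ne.symm, Finset.mem_erase.mpr ⟨g1.ne.symm, hzA⟩⟩
        have hc := Finset.card_le_card hsub
        rw [hZcard] at hc
        have hc2 : (insert (0 : Fin n) (((Aset n t).erase u).erase w)).card ≤
            (((Aset n t).erase u).erase w).card + 1 := Finset.card_insert_le _ _
        have hc3 : (((Aset n t).erase u).erase w).card = t - 2 := by
          rw [Finset.card_erase_of_mem (Finset.mem_erase.mpr ⟨huw.symm, hwA⟩),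
            Finset.card_erase_of_mem huA, card_Aset (by omega)]
          omega
        omega
      · push_neg at hex
        have hsub : Z ⊆ {(0 : Fin n)} := by
          intro z hz
          simpa using hval0 z (hex z hz)
        have := Finset.card_le_card hsub
        rw [hZcard] at this
        simp at this
        omega

/-- The key step lemma: adding a missing edge `uv` where `u` has `t-1` suitable
neighbours creates a copy of `K_{2,t}` through the new edge. -/
private lemma satStep_general [NeZero n] (ht : 3 ≤ t) (K : SimpleGraph (Fin n))
    (h0 : ∀ x : Fin n, x ≠ 0 → K.Adj 0 x)
    (u v : Fin n) (huv : u ≠ v) (hK : ¬ K.Adj u v) (hu0 : u ≠ 0) (hv0 : v ≠ 0)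
    (B : Finset (Fin n)) (hB : B.card = t - 1) (hBu : ∀ b ∈ B, K.Adj u b)
    (hB0 : (0 : Fin n) ∉ B) (hBv : v ∉ B) :
    SatStep (Kst 2 t) K (K ⊔ SimpleGraph.fromEdgeSet {s(u, v)}) := by
  set K' := K ⊔ SimpleGraph.fromEdgeSet {s(u, v)} with hK'
  have hBnu : u ∉ B := fun h => (hBu u h).ne rfl
  have hvB : v ∉ B := hBv
  set T : Finset (Fin n) := insert v B with hT
  have hTcard : T.card = t := by
    rw [hT, Finset.card_insert_of_notMem hvB, hB]; omega
  have huT : u ∉ T := by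
    rw [hT]; simp [huv, hBnu]
  have h0T : (0 : Fin n) ∉ T := by
    rw [hT]; simp [Ne.symm hv0, hB0]
  -- adjacency of K' to elements of T
  have hadjU : ∀ z ∈ T, K'.Adj u z := by
    intro z hz
    rw [hT, Finset.mem_insert] at hz
    rcases hz with rfl | hz
    · exact Or.inr (by simp [SimpleGraph.fromEdgeSet_adj, huv])
    · exact Or.inl (hBu z hz)
  have hadj0 : ∀ z ∈ T, K'.Adj 0 z := by
    intro z hz
    have hz0 : z ≠ 0 := by rintro rfl; exact h0T hz
    exact Or.inl (h0 z hz0)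
  -- the equivalence Fin t ≃ T
  let g : Fin t ≃ {x // x ∈ T} := (Finset.equivFinOfCardEq hTcard).symm
  -- the embedding
  let F : Fin 2 ⊕ Fin t → Fin n := Sum.elim (fun i => if i = 0 then u else 0) (fun j => (g j : Fin n))
  have hFinl0 : F (Sum.inl 0) = u := by simp [F]
  have hFinl1 : F (Sum.inl 1) = 0 := by simp [F]
  have hFinr : ∀ j, F (Sum.inr j) ∈ T := fun j => (g j).2
  have hFinj : Function.Injective F := by
    rintro (a | a) (b | b) h
    · congr 1
      fin_cases a <;> fin_cases b <;> simp_all [F]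
    · exfalso
      simp only [F, Sum.elim_inl, Sum.elim_inr] at h
      by_cases ha : a = 0
      · subst ha; simp at h; exact huT (h ▸ (g b).2)
      · simp [ha] at h; exact h0T (h ▸ (g b).2)
    · exfalso
      simp only [F, Sum.elim_inl, Sum.elim_inr] at h
      by_cases hb : b = 0
      · subst hb; simp at h; exact huT (h ▸ (g a).2)
      · simp [hb] at h; exact h0T (h ▸ (g a).2)
    · congr 1
      simp only [F, Sum.elim_inr] at h
      exact g.injective (Subtype.ext h)
  have hFadj : ∀ a b, (Kst 2 t).Adj a b → K'.Adj (F a) (F b) := by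
    rintro (a | a) (b | b) hab
    · simp [Kst] at hab
    · simp only [F, Sum.elim_inl, Sum.elim_inr]
      by_cases ha : a = 0
      · subst ha; simpa [F] using hadjU _ (hFinr b)
      · simp only [if_neg ha]
        exact hadj0 _ (hFinr b)
    · simp only [F, Sum.elim_inl, Sum.elim_inr]
      by_cases hb : b = 0
      · subst hb; simpa [F] using (hadjU _ (hFinr a)).symm
      · simpa [hb, F] using (hadj0 _ (hFinr a)).symm
    · simp [Kst] at hab
  refine ⟨s(u, v), ?_, rfl, ?_⟩
  · rw [SimpleGraph.mem_edgeSet, SimpleGraph.compl_adj]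
    exact ⟨huv, hK⟩
  · refine ⟨⟨F, hFinj⟩, hFadj, Sum.inl 0, Sum.inr (g.symm ⟨v, by rw [hT]; exact Finset.mem_insert_self _ _⟩), ?_, ?_⟩
    · simp [Kst]
    · simp only [Function.Embedding.coeFn_mk, hFinl0]
      have : F (Sum.inr (g.symm ⟨v, by rw [hT]; exact Finset.mem_insert_self _ _⟩)) = v := by
        simp [F]
      rw [this]

/-- From any supergraph of `myG`, the saturation process can reach `⊤`. -/
private lemma reaches_top_s9 (ht : 3 ≤ t) (htn : t + 1 < n) :
    ∀ K : SimpleGraph (Fin n), myG n t ≤ K → SatReaches (Kst 2 t) K ⊤ := by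
  have hn : 0 < n := by omega
  haveI : NeZero n := ⟨by omega⟩
  have main : ∀ m : ℕ, ∀ K : SimpleGraph (Fin n), Kᶜ.edgeSet.ncard = m →
      myG n t ≤ K → SatReaches (Kst 2 t) K ⊤ := by
    intro m
    induction m using Nat.strong_induction_on with
    | _ m ih =>
      intro K hm hGK
      by_cases htop : K = ⊤
      · subst htop; exact Relation.ReflTransGen.refl
      · -- there is a missing edge
        have hne : ¬ (⊤ : SimpleGraph (Fin n)) ≤ K := fun h => htop (le_antisymm le_top h)
        have : ∃ u v : Fin n, u ≠ v ∧ ¬ K.Adj u v := by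
          by_contra hcon
          push_neg at hcon
          exact hne (fun {a b} hab => hcon a b hab.ne)
        have h0 : ∀ x : Fin n, x ≠ 0 → K.Adj 0 x := fun x hx => hGK (myG_adj_zero hx)
        -- find a good missing edge and a good neighbour set B
        have key : ∃ u v : Fin n, u ≠ v ∧ ¬ K.Adj u v ∧ u ≠ 0 ∧ v ≠ 0 ∧
            ∃ B : Finset (Fin n), B.card = t - 1 ∧ (∀ b ∈ B, K.Adj u b) ∧
              (0 : Fin n) ∉ B ∧ v ∉ B := by
          by_cases hc : ∃ a x : Fin n, a ∈ Aset n t ∧ a ≠ x ∧ ¬ K.Adj a x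
          · obtain ⟨a, x, haA, hax, hKax⟩ := hc
            have ha0 : a ≠ 0 := by
              rintro rfl
              exact (zero_not_mem_Aset) haA
            have hx0 : x ≠ 0 := by
              rintro rfl
              exact hKax ((h0 a ha0).symm)
            have hxA : x ∉ Aset n t := fun hxA => hKax (hGK (Aset_adj haA hxA hax))
            refine ⟨a, x, hax, hKax, ha0, hx0, (Aset n t).erase a, ?_, ?_, ?_, ?_⟩
            · rw [Finset.card_erase_of_mem haA, card_Aset (by omega)]
            · intro b hb
              obtain ⟨hba, hbA⟩ := Finset.mem_erase.mp hb
              exact hGK (Aset_adj haA hbA (Ne.symm hba))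
            · exact fun h => (zero_not_mem_Aset) (Finset.mem_erase.mp h).2
            · exact fun h => hxA (Finset.mem_erase.mp h).2
          · push_neg at hc
            obtain ⟨u, v, huv, hKuv⟩ := this
            have hu0 : u ≠ 0 := by
              rintro rfl
              exact hKuv (h0 v (Ne.symm huv))
            have hv0 : v ≠ 0 := by
              rintro rfl
              exact hKuv ((h0 u huv).symm)
            have huA : u ∉ Aset n t := fun h => hKuv (hc u v h huv)
            have hvA : v ∉ Aset n t := fun h => hKuv (hc v u h (Ne.symm huv)).symm
            have h1n : (1 : ℕ) < n := by omega
            set a₁ : Fin n := ⟨1, h1n⟩ with ha₁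
            have ha₁A : a₁ ∈ Aset n t :=
              mem_Aset.mpr (show 1 ≤ 1 ∧ 1 ≤ t from ⟨le_rfl, by omega⟩)
            refine ⟨u, v, huv, hKuv, hu0, hv0, (Aset n t).erase a₁, ?_, ?_, ?_, ?_⟩
            · rw [Finset.card_erase_of_mem ha₁A, card_Aset (by omega)]
            · intro b hb
              obtain ⟨hba, hbA⟩ := Finset.mem_erase.mp hb
              have hbu : b ≠ u := fun h => huA (h ▸ hbA)
              exact (hc b u hbA hbu).symm
            · exact fun h => (zero_not_mem_Aset) (Finset.mem_erase.mp h).2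
            · exact fun h => hvA (Finset.mem_erase.mp h).2
        obtain ⟨u, v, huv, hKuv, hu0, hv0, B, hB, hBu, hB0, hBv⟩ := key
        have hstep := satStep_general ht K h0 u v huv hKuv hu0 hv0 B hB hBu hB0 hBv
        set K' := K ⊔ SimpleGraph.fromEdgeSet {s(u, v)} with hK'
        have hKK' : K < K' := by
          refine lt_of_le_of_ne le_sup_left (fun h => ?_)
          have hadjuv : K'.Adj u v := Or.inr (by simp [SimpleGraph.fromEdgeSet_adj, huv])
          rw [← h] at hadjuv
          exact hKuv hadjuv
        have hGK' : myG n t ≤ K' := le_trans hGK le_sup_left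
        have hlt : K'ᶜ.edgeSet.ncard < m := by
          rw [← hm]
          apply Set.ncard_lt_ncard
          · rw [SimpleGraph.edgeSet_ssubset_edgeSet]
            exact compl_lt_compl_iff_lt.mpr hKK'
          · exact Set.toFinite _
        exact Relation.ReflTransGen.head hstep (ih _ hlt K' rfl hGK')
  intro K hGK
  exact main _ K rfl hGK

/-- Edge count bound. -/
private lemma myG_card (ht : 3 ≤ t) (htn : t + 1 < n) :
    (myG n t).edgeSet.ncard ≤ n - 1 + t.choose 2 := by
  haveI : NeZero n := ⟨by omega⟩
  classical
  set V := {x : Fin n // x ∈ Aset n t}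
  haveI : Fintype V := inferInstance
  have hcardV : Fintype.card V = t := by
    rw [Fintype.card_coe, card_Aset (by omega)]
  set F1 : Finset (Sym2 (Fin n)) :=
    (Finset.univ.erase (0 : Fin n)).image (fun x => s((0 : Fin n), x)) with hF1
  set F2 : Finset (Sym2 (Fin n)) :=
    (⊤ : SimpleGraph V).edgeFinset.image (Sym2.map (fun x : V => (x : Fin n))) with hF2
  have hsub : (myG n t).edgeSet ⊆ ↑(F1 ∪ F2) := by
    rintro e he
    induction e with
    | h x y =>
      rw [SimpleGraph.mem_edgeSet] at he
      obtain ⟨hxy, hcase⟩ := he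
      rw [Finset.coe_union, Set.mem_union]
      rcases hcase with h | h | h
      · left
        rw [hF1, Finset.coe_image, Set.mem_image]
        refine ⟨y, ?_, ?_⟩
        · simp only [Finset.coe_erase, Set.mem_diff, Finset.coe_univ, Set.mem_univ, true_and]
          simp only [Set.mem_singleton_iff]
          intro hy0
          exact hxy (by apply Fin.ext; simp [h, hy0])
        · have : x = 0 := Fin.ext (by simpa using h)
          rw [this]
      · left
        rw [hF1, Finset.coe_image, Set.mem_image]
        refine ⟨x, ?_, ?_⟩
        · simp only [Finset.coe_erase, Set.mem_diff, Finset.coe_univ, Set.mem_univ, true_and]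
          simp only [Set.mem_singleton_iff]
          intro hx0
          exact hxy (by apply Fin.ext; simp [h, hx0])
        · have : y = 0 := Fin.ext (by simpa using h)
          rw [this, Sym2.eq_swap]
      · right
        rw [hF2, Finset.coe_image, Set.mem_image]
        refine ⟨s((⟨x, mem_Aset.mpr h.1⟩ : V), (⟨y, mem_Aset.mpr h.2⟩ : V)), ?_, rfl⟩
        simp only [Finset.mem_coe, SimpleGraph.mem_edgeFinset, SimpleGraph.mem_edgeSet, SimpleGraph.top_adj]
        exact fun hcon => hxy (congrArg Subtype.val hcon)
  calc (myG n t).edgeSet.ncard ≤ (↑(F1 ∪ F2) : Set (Sym2 (Fin n))).ncard :=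
        Set.ncard_le_ncard hsub (Set.toFinite _)
    _ = (F1 ∪ F2).card := Set.ncard_coe_finset _
    _ ≤ F1.card + F2.card := Finset.card_union_le _ _
    _ ≤ n - 1 + t.choose 2 := by
        gcongr
        · calc F1.card ≤ (Finset.univ.erase (0 : Fin n)).card := Finset.card_image_le
            _ = n - 1 := by rw [Finset.card_erase_of_mem (Finset.mem_univ _)]; simp
        · calc F2.card ≤ (⊤ : SimpleGraph V).edgeFinset.card := Finset.card_image_le
            _ = t.choose 2 := by
                rw [SimpleGraph.card_edgeFinset_top_eq_card_choose_two, hcardV]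

end MainProof

theorem wsat_K2t_upper_even_small (n t : ℕ) (ht : 3 ≤ t) (hte : Even t)
    (hn1 : t + 2 ≤ n) (hn2 : n ≤ 2 * t - 2) :
    wsat n (Kst 2 t) ≤ n - 1 + t.choose 2 := by
  have htn : t + 1 < n := by omega
  haveI : NeZero n := ⟨by omega⟩
  have hws : WeaklySat (Kst 2 t) (myG n t) :=
    ⟨myG_free ht htn, reaches_top_s9 ht htn (myG n t) le_rfl⟩
  have hmem : (myG n t).edgeSet.ncard ∈
      {m | ∃ G : SimpleGraph (Fin n), WeaklySat (Kst 2 t) G ∧ G.edgeSet.ncard = m} :=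
    ⟨myG n t, hws, rfl⟩
  exact le_trans (Nat.sInf_le hmem) (myG_card ht htn)
end

section
/- No bipartite graph on n ≥ t+2 vertices is weakly K_{2,t}-saturated for t ≥ 2. -/
open SimpleGraph

lemma fin2_aux : ∀ x y z w : Fin 2, x ≠ y → x ≠ w → w ≠ z → z ≠ y := by decide

open Sum in
lemma aux_inl_inr {V : Type*} (H : SimpleGraph V) (C : V → Fin 2)
    (hC : ∀ u v, H.Adj u v → C u ≠ C v)
    {t : ℕ} (ht : 2 ≤ t) (e : Sym2 V)
    (f : (Fin 2 ⊕ Fin t) ↪ V)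
    (hf : ∀ a b, (Kst 2 t).Adj a b → (H ⊔ SimpleGraph.fromEdgeSet {e}).Adj (f a) (f b))
    (i : Fin 2) (j : Fin t) (hfe : s(f (inl i), f (inr j)) = e) :
    C (f (inl i)) ≠ C (f (inr j)) := by
  have step : ∀ x y : Fin 2 ⊕ Fin t, (Kst 2 t).Adj x y → x ≠ inl i → x ≠ inr j →
      H.Adj (f x) (f y) := by
    intro x y hxy hx1 hx2
    have h' := hf x y hxy
    rcases (SimpleGraph.sup_adj _ _ _ _).mp h' with h | h
    · exact h
    · exfalso
      rw [SimpleGraph.fromEdgeSet_adj] at h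
      have hsm : s(f x, f y) = e := by simpa using h.1
      rw [← hfe, Sym2.eq_iff] at hsm
      rcases hsm with ⟨h1, _⟩ | ⟨h1, _⟩
      · exact hx1 (f.injective h1)
      · exact hx2 (f.injective h1)
  obtain ⟨i', hi'⟩ := exists_ne i
  have : Nontrivial (Fin t) := Fin.nontrivial_iff_two_le.mpr ht
  obtain ⟨j', hj'⟩ := exists_ne j
  have h1 : H.Adj (f (inl i')) (f (inr j)) :=
    step _ _ (by simp [Kst]) (by simp [hi']) (by simp)
  have h2 : H.Adj (f (inl i')) (f (inr j')) :=
    step _ _ (by simp [Kst]) (by simp [hi']) (by simp)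
  have h3 : H.Adj (f (inr j')) (f (inl i)) :=
    step _ _ (by simp [Kst]) (by simp) (by simp [hj'])
  exact fin2_aux _ _ _ _ (hC _ _ h1) (hC _ _ h2) (hC _ _ h3)

theorem not_weaklySat_of_bipartite {V : Type*} [Fintype V] (t : ℕ) (ht : 2 ≤ t)
    (hcard : t + 2 ≤ Fintype.card V)
    (G : SimpleGraph V) (hbip : G.Colorable 2) :
    ¬ WeaklySat (Kst 2 t) G := by
  rintro ⟨-, hreach⟩
  obtain ⟨C⟩ := hbip
  have inv : ∀ H' : SimpleGraph V, SatReaches (Kst 2 t) G H' →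
      ∀ u v, H'.Adj u v → C u ≠ C v := by
    intro H' hH'
    induction hH' with
    | refl => exact fun u v h => C.valid h
    | tail _ hstep ih =>
      obtain ⟨e, he, rfl, f, hf, a, b, hab, hfe⟩ := hstep
      have key : C (f a) ≠ C (f b) := by
        rcases a with i | j <;> rcases b with i' | j' <;>
          simp only [Kst, completeBipartiteGraph_adj, Sum.isLeft_inl, Sum.isRight_inl,
            Sum.isLeft_inr, Sum.isRight_inr] at hab
        · simp at hab
        · exact aux_inl_inr _ C ih ht e f hf i j' hfe
        · exact (aux_inl_inr _ C ih ht e f hf i' j (Sym2.eq_swap.trans hfe)).symm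
        · simp at hab
      intro u v huv
      rcases (SimpleGraph.sup_adj _ _ _ _).mp huv with h | h
      · exact ih u v h
      · rw [SimpleGraph.fromEdgeSet_adj] at h
        have hsm : s(u, v) = e := by simpa using h.1
        rw [← hfe, Sym2.eq_iff] at hsm
        rcases hsm with ⟨h1, h2⟩ | ⟨h1, h2⟩
        · subst h1; subst h2; exact key
        · subst h1; subst h2; exact key.symm
  obtain ⟨u, v, hne, heq⟩ := Fintype.exists_ne_map_eq_of_card_lt C
    (by simpa using by omega)
  exact inv ⊤ hreach u v hne heq
end
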